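/- arXiv:1909.11694 — 6 statements merged into one kernel-verified Lean document; each statement's English description precedes it below -/
import Mathlib

section
/- Let G be a connected graph on n ≥ 2 vertices with adjacency matrix A, let j be a vertex of G, and let s* ∈ {−1,1}ⁿ be the vector with s*_j = −1 and s*_i = 1 for all i ≠ j. Then λ₂(A + I) < λ₁(A + diag(s*)), i.e., the second-largest eigenvalue of G with a loop of weight +1 at every vertex is strictly less than the largest eigenvalue of G with a loop of weight −1 at j and loops of weight +1 at all other vertices. -/
open scoped Classical

/-- Ascending list of eigenvalues of a real symmetric matrix. -/
noncomputable def eigList {V : Type*} [Fintype V] [DecidableEq V]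
    (A : Matrix V V ℝ) : List ℝ :=
  if h : A.IsHermitian then (Finset.univ.val.map h.eigenvalues).sort (· ≤ ·) else []

/-- The largest eigenvalue of a real symmetric `n × n` matrix. -/
noncomputable def maxEig {n : ℕ} (A : Matrix (Fin n) (Fin n) ℝ) : ℝ :=
  (eigList A).getD (n - 1) 0

/-- The second largest eigenvalue of a real symmetric `n × n` matrix. -/
noncomputable def secondMaxEig {n : ℕ} (A : Matrix (Fin n) (Fin n) ℝ) : ℝ :=
  (eigList A).getD (n - 2) 0

open Matrix

section Helpers

variable {m : ℕ} {M : Matrix (Fin m) (Fin m) ℝ}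

lemma eigList_eq (hM : M.IsHermitian) :
    eigList M = (Finset.univ.val.map hM.eigenvalues).sort (· ≤ ·) := dif_pos hM

lemma eigList_length (hM : M.IsHermitian) : (eigList M).length = m := by
  rw [eigList_eq hM]; simp [Multiset.length_sort]

lemma eigList_sorted (hM : M.IsHermitian) : (eigList M).Pairwise (· ≤ ·) := by
  rw [eigList_eq hM]; exact Multiset.pairwise_sort _ _

lemma quad_form_eq (hM : M.IsHermitian) (z : Fin m → ℝ) :
    ((hM.eigenvectorUnitary : Matrix (Fin m) (Fin m) ℝ) *ᵥ z) ⬝ᵥ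
      ((hM.eigenvectorUnitary : Matrix (Fin m) (Fin m) ℝ) *ᵥ z) = ∑ k, z k ^ 2 ∧
    ((hM.eigenvectorUnitary : Matrix (Fin m) (Fin m) ℝ) *ᵥ z) ⬝ᵥ
      (M *ᵥ ((hM.eigenvectorUnitary : Matrix (Fin m) (Fin m) ℝ) *ᵥ z)) =
      ∑ k, hM.eigenvalues k * z k ^ 2 := by
  set U : Matrix (Fin m) (Fin m) ℝ := (hM.eigenvectorUnitary : Matrix (Fin m) (Fin m) ℝ) with hU
  have hUU : star U * U = 1 := mem_unitaryGroup_iff'.mp hM.eigenvectorUnitary.2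
  have hUU' : Uᴴ * U = 1 := hUU
  have hvec : ∀ w : Fin m → ℝ, (U *ᵥ z) ⬝ᵥ (U *ᵥ w) = z ⬝ᵥ w := by
    intro w
    rw [dotProduct_mulVec, ← vecMul_transpose, vecMul_vecMul,
      ← conjTranspose_eq_transpose_of_trivial, hUU', vecMul_one]
  constructor
  · rw [hvec z]
    simp [dotProduct, sq]
  · have hMU : M * U = U * diagonal hM.eigenvalues := by
      conv_lhs => rw [hM.spectral_theorem]
      rw [RCLike.ofReal_real_eq_id]
      simp only [Function.comp_def, id_eq]
      rw [Unitary.conjStarAlgAut_apply, mul_assoc, hUU, mul_one]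
    have hMx : M *ᵥ (U *ᵥ z) = U *ᵥ (diagonal hM.eigenvalues *ᵥ z) := by
      rw [mulVec_mulVec, hMU, ← mulVec_mulVec]
    rw [hMx, hvec]
    simp only [dotProduct, mulVec_diagonal]
    exact Finset.sum_congr rfl fun k _ => by ring

lemma eig_le_maxEig (hM : M.IsHermitian) (hm : 0 < m) (i : Fin m) :
    hM.eigenvalues i ≤ maxEig M := by
  have hlen := eigList_length hM
  have hmem : hM.eigenvalues i ∈ eigList M := by
    rw [eigList_eq hM, Multiset.mem_sort]
    exact Multiset.mem_map_of_mem _ (Finset.mem_univ i)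
  obtain ⟨k, hk⟩ := List.mem_iff_get.mp hmem
  have hlt : m - 1 < (eigList M).length := by omega
  have hmax : maxEig M = (eigList M).get ⟨m - 1, hlt⟩ := by
    rw [maxEig, List.getD_eq_getElem _ _ hlt]; rfl
  rw [hmax, ← hk]
  exact (eigList_sorted hM).rel_get_of_le (by simp only [Fin.le_def]; omega)

lemma rayleigh_le (hM : M.IsHermitian) (hm : 0 < m) (v : Fin m → ℝ) :
    v ⬝ᵥ (M *ᵥ v) ≤ maxEig M * (v ⬝ᵥ v) := by
  set U : Matrix (Fin m) (Fin m) ℝ := (hM.eigenvectorUnitary : Matrix (Fin m) (Fin m) ℝ) with hU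
  have hUU : U * star U = 1 := mem_unitaryGroup_iff.mp hM.eigenvectorUnitary.2
  set z : Fin m → ℝ := star U *ᵥ v with hz
  have hv : U *ᵥ z = v := by rw [hz, mulVec_mulVec, hUU, one_mulVec]
  obtain ⟨h1, h2⟩ := quad_form_eq hM z
  rw [← hv, h1, h2, Finset.mul_sum]
  exact Finset.sum_le_sum fun k _ =>
    mul_le_mul_of_nonneg_right (eig_le_maxEig hM hm k) (sq_nonneg _)

lemma exists_two_eigs (hM : M.IsHermitian) (hm : 2 ≤ m) :
    ∃ i₁ i₂ : Fin m, i₁ ≠ i₂ ∧ secondMaxEig M ≤ hM.eigenvalues i₁ ∧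
      secondMaxEig M ≤ hM.eigenvalues i₂ := by
  set l := eigList M with hl
  have hlen : l.length = m := eigList_length hM
  have hsort := eigList_sorted hM
  have hlt : m - 2 < l.length := by omega
  have hs : secondMaxEig M = l.get ⟨m - 2, hlt⟩ := by
    rw [secondMaxEig, ← hl, List.getD_eq_getElem _ _ hlt]; rfl
  have key : ∀ a ∈ l.drop (m - 2), secondMaxEig M ≤ a := by
    intro a ha
    obtain ⟨i, hi, rfl⟩ := List.mem_iff_getElem.mp ha
    have hi' : m - 2 + i < l.length := by
      have := hi; rw [List.length_drop] at this; omega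
    rw [List.getElem_drop, hs]
    exact hsort.rel_get_of_le (a := ⟨m - 2, hlt⟩) (b := ⟨m - 2 + i, hi'⟩)
      (by simp only [Fin.le_def]; omega)
  have hcount : 2 ≤ l.countP (fun a => decide (secondMaxEig M ≤ a)) := by
    have hd : (l.drop (m - 2)).length = 2 := by rw [List.length_drop]; omega
    have hc1 : (l.drop (m - 2)).countP (fun a => decide (secondMaxEig M ≤ a))
        = (l.drop (m - 2)).length := by
      rw [List.countP_eq_length]
      intro a ha; simpa using key a ha
    have hc2 : l.countP (fun a => decide (secondMaxEig M ≤ a)) =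
        (l.take (m - 2)).countP (fun a => decide (secondMaxEig M ≤ a)) +
        (l.drop (m - 2)).countP (fun a => decide (secondMaxEig M ≤ a)) := by
      conv_lhs => rw [← List.take_append_drop (m - 2) l]
      rw [List.countP_append]
    omega
  have hcard : 2 ≤ (Finset.univ.filter
      (fun i : Fin m => secondMaxEig M ≤ hM.eigenvalues i)).card := by
    have h1 : (Finset.univ.filter
        (fun i : Fin m => secondMaxEig M ≤ hM.eigenvalues i)).card
        = Multiset.countP (fun i : Fin m => secondMaxEig M ≤ hM.eigenvalues i)
            (Finset.univ.val) := by
      rw [Finset.card, Finset.filter_val, ← Multiset.countP_eq_card_filter]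
    have h2 : Multiset.countP (fun i : Fin m => secondMaxEig M ≤ hM.eigenvalues i)
        (Finset.univ.val)
        = Multiset.countP (fun a : ℝ => secondMaxEig M ≤ a)
            (Finset.univ.val.map hM.eigenvalues) := by
      rw [Multiset.countP_map, Multiset.countP_eq_card_filter]
    have h3 : (Finset.univ.val.map hM.eigenvalues : Multiset ℝ) = (l : Multiset ℝ) := by
      rw [hl, eigList_eq hM, Multiset.sort_eq]
    rw [h1, h2, h3, Multiset.coe_countP]
    exact hcount
  obtain ⟨a, ha, b, hb, hab⟩ := Finset.one_lt_card.mp hcard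
  simp only [Finset.mem_filter] at ha hb
  exact ⟨a, b, hab, ha.2, hb.2⟩

end Helpers

/-- Let `G` be a connected graph on `n ≥ 2` vertices with adjacency matrix `A`, let `j`
be a vertex, and let `s*` have a `−1` at `j` and `+1` everywhere else.  Then
`λ₂(A + I) < λ₁(A + diag s*)`. -/
theorem secondMaxEig_lt_maxEig_oneNeg {n : ℕ} (hn : 2 ≤ n)
    (G : SimpleGraph (Fin n)) (hG : G.Connected) (j : Fin n) :
    secondMaxEig (G.adjMatrix ℝ + 1) <
      maxEig (G.adjMatrix ℝ +
        Matrix.diagonal (fun i => if i = j then (-1 : ℝ) else 1)) := by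
  by_contra hcon
  push_neg at hcon
  set A : Matrix (Fin n) (Fin n) ℝ := G.adjMatrix ℝ with hA
  set A' : Matrix (Fin n) (Fin n) ℝ := A + 1 with hA'
  set B : Matrix (Fin n) (Fin n) ℝ :=
    A + Matrix.diagonal (fun i => if i = j then (-1 : ℝ) else 1) with hB
  have hn0 : 0 < n := by omega
  have hAH : A.IsHermitian := by
    rw [Matrix.IsHermitian, Matrix.conjTranspose_eq_transpose_of_trivial]
    exact G.isSymm_adjMatrix
  have hA'H : A'.IsHermitian := hAH.add Matrix.isHermitian_one
  have hBH : B.IsHermitian := hAH.add (Matrix.isHermitian_diagonal _)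
  -- off-diagonal entries of B are nonnegative
  have hBoff : ∀ i k, i ≠ k → 0 ≤ B i k := by
    intro i k hik
    rw [hB]
    simp only [Matrix.add_apply, Matrix.diagonal_apply_ne _ hik, add_zero, hA,
      SimpleGraph.adjMatrix_apply]
    split <;> norm_num
  have hBadj : ∀ i k, G.Adj i k → B i k = 1 := by
    intro i k hik
    rw [hB]
    simp only [Matrix.add_apply, Matrix.diagonal_apply_ne _ (G.ne_of_adj hik), add_zero, hA,
      SimpleGraph.adjMatrix_apply, if_pos hik]
  -- the eigen-equation extraction step
  have eigstep : ∀ v : Fin n → ℝ, v ⬝ᵥ (B *ᵥ v) = maxEig B * (v ⬝ᵥ v) →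
      B *ᵥ v = maxEig B • v := by
    intro v hv
    set C : Matrix (Fin n) (Fin n) ℝ := maxEig B • (1 : Matrix (Fin n) (Fin n) ℝ) - B with hC
    have hCapp : ∀ u : Fin n → ℝ, C *ᵥ u = maxEig B • u - B *ᵥ u := by
      intro u
      rw [hC, Matrix.sub_mulVec, Matrix.smul_mulVec, Matrix.one_mulVec]
    have hCdot : ∀ u : Fin n → ℝ, u ⬝ᵥ (C *ᵥ u) = maxEig B * (u ⬝ᵥ u) - u ⬝ᵥ (B *ᵥ u) := by
      intro u
      rw [hCapp, dotProduct_sub, dotProduct_smul, smul_eq_mul]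
    have hCH : C.IsHermitian := by
      rw [Matrix.IsHermitian, hC, Matrix.conjTranspose_sub, Matrix.conjTranspose_smul,
        Matrix.conjTranspose_one, hBH.eq, star_trivial]
    have hCps : C.PosSemidef := by
      refine Matrix.PosSemidef.of_dotProduct_mulVec_nonneg hCH fun u => ?_
      have hsu : star u = u := by ext i; simp
      rw [hsu, hCdot]
      have := rayleigh_le hBH hn0 u
      linarith
    have h0 : star v ⬝ᵥ (C *ᵥ v) = 0 := by
      have hsv : star v = v := by ext i; simp
      rw [hsv, hCdot, hv, sub_self]
    have hC0 := (hCps.dotProduct_mulVec_zero_iff v).mp h0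
    rw [hCapp] at hC0
    exact (sub_eq_zero.mp hC0).symm
  -- pick two eigenvalue indices of A' at least the second largest eigenvalue
  obtain ⟨i₁, i₂, hne, he₁, he₂⟩ := exists_two_eigs hA'H hn
  set U : Matrix (Fin n) (Fin n) ℝ :=
    (hA'H.eigenvectorUnitary : Matrix (Fin n) (Fin n) ℝ) with hU
  obtain ⟨a, b, hab0, habj⟩ : ∃ a b : ℝ, ¬(a = 0 ∧ b = 0) ∧
      a * U j i₁ + b * U j i₂ = 0 := by
    by_cases hc : U j i₁ = 0
    · exact ⟨1, 0, fun h => one_ne_zero h.1, by rw [hc]; ring⟩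
    · exact ⟨U j i₂, -(U j i₁), fun h => hc (neg_eq_zero.mp h.2), by ring⟩
  set z : Fin n → ℝ := a • (Pi.single i₁ 1 : Fin n → ℝ) + b • (Pi.single i₂ 1 : Fin n → ℝ) with hz
  have hz1 : z i₁ = a := by
    simp [hz, Pi.single_apply, hne, hne.symm]
  have hz2 : z i₂ = b := by
    simp [hz, Pi.single_apply, hne, hne.symm]
  have hzsupp : ∀ k, k ≠ i₁ → k ≠ i₂ → z k = 0 := by
    intro k h1 h2
    simp [hz, Pi.single_apply, h1, h2]
  set x : Fin n → ℝ := U *ᵥ z with hx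
  have hxj : x j = 0 := by
    have hxj' : x j = a * U j i₁ + b * U j i₂ := by
      rw [hx, hz, Matrix.mulVec_add, Matrix.mulVec_smul, Matrix.mulVec_smul]
      simp [Matrix.mulVec_single, mul_comm]
    rw [hxj', habj]
  obtain ⟨hq1, hq2⟩ := quad_form_eq hA'H z
  rw [← hU, ← hx] at hq1 hq2
  have hpos : 0 < x ⬝ᵥ x := by
    rw [hq1]
    obtain ⟨k, hk⟩ : ∃ k, z k ≠ 0 := by
      rcases not_and_or.mp hab0 with h | h
      · exact ⟨i₁, by rwa [hz1]⟩
      · exact ⟨i₂, by rwa [hz2]⟩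
    have h1 : 0 < z k ^ 2 := lt_of_le_of_ne (sq_nonneg _) (Ne.symm (pow_ne_zero 2 hk))
    refine lt_of_lt_of_le h1 ?_
    exact Finset.single_le_sum (f := fun k => z k ^ 2) (fun _ _ => sq_nonneg _)
      (Finset.mem_univ k)
  have hlow : secondMaxEig A' * (x ⬝ᵥ x) ≤ x ⬝ᵥ (A' *ᵥ x) := by
    rw [hq1, hq2, Finset.mul_sum]
    refine Finset.sum_le_sum fun k _ => ?_
    by_cases hk1 : k = i₁
    · subst hk1; exact mul_le_mul_of_nonneg_right he₁ (sq_nonneg _)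
    by_cases hk2 : k = i₂
    · subst hk2; exact mul_le_mul_of_nonneg_right he₂ (sq_nonneg _)
    · rw [hzsupp k hk1 hk2]; simp
  -- the quadratic forms of B and A' agree on vectors vanishing at j
  have hBA' : B = A' + Matrix.diagonal (fun i => if i = j then (-2 : ℝ) else 0) := by
    rw [hB, hA']
    ext i k
    by_cases h : i = k
    · subst h
      by_cases hj : i = j <;>
        simp [Matrix.add_apply, Matrix.diagonal_apply_eq, Matrix.one_apply_eq, hj] <;> ring
    · simp [Matrix.add_apply, Matrix.diagonal_apply_ne _ h, Matrix.one_apply_ne h]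
  have hBA : ∀ v : Fin n → ℝ, v j = 0 → v ⬝ᵥ (B *ᵥ v) = v ⬝ᵥ (A' *ᵥ v) := by
    intro v hv
    rw [hBA', Matrix.add_mulVec, dotProduct_add]
    have : v ⬝ᵥ (Matrix.diagonal (fun i => if i = j then (-2 : ℝ) else 0) *ᵥ v) = 0 := by
      simp only [dotProduct, Matrix.mulVec_diagonal]
      refine Finset.sum_eq_zero fun i _ => ?_
      by_cases h : i = j
      · subst h; rw [hv]; ring
      · simp [h]
    rw [this, add_zero]
  -- rayleigh chain
  have h1 : secondMaxEig A' * (x ⬝ᵥ x) ≤ x ⬝ᵥ (B *ᵥ x) := by rw [hBA x hxj]; exact hlow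
  have h2 : x ⬝ᵥ (B *ᵥ x) ≤ maxEig B * (x ⬝ᵥ x) := rayleigh_le hBH hn0 x
  have h3 : maxEig B * (x ⬝ᵥ x) ≤ secondMaxEig A' * (x ⬝ᵥ x) :=
    mul_le_mul_of_nonneg_right hcon hpos.le
  have hxBx : x ⬝ᵥ (B *ᵥ x) = maxEig B * (x ⬝ᵥ x) := le_antisymm h2 (by linarith)
  have hBx : B *ᵥ x = maxEig B • x := eigstep x hxBx
  -- pass to absolute values
  set y : Fin n → ℝ := fun i => |x i| with hy
  have hyy : y ⬝ᵥ y = x ⬝ᵥ x := by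
    simp only [dotProduct, hy]
    exact Finset.sum_congr rfl fun i _ => abs_mul_abs_self _
  have hyj : y j = 0 := by simp only [hy]; rw [hxj, abs_zero]
  have hxBy : x ⬝ᵥ (B *ᵥ x) ≤ y ⬝ᵥ (B *ᵥ y) := by
    simp only [dotProduct, Matrix.mulVec]
    refine Finset.sum_le_sum fun i _ => ?_
    rw [Finset.mul_sum, Finset.mul_sum]
    refine Finset.sum_le_sum fun k _ => ?_
    by_cases hik : i = k
    · subst hik
      refine le_of_eq ?_
      simp only [hy]
      calc x i * (B i i * x i) = B i i * (x i * x i) := by ring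
        _ = B i i * (|x i| * |x i|) := by rw [abs_mul_abs_self]
        _ = |x i| * (B i i * |x i|) := by ring
    · have hle := le_abs_self (x i * (B i k * x k))
      rwa [abs_mul, abs_mul, abs_of_nonneg (hBoff i k hik)] at hle
  have hyBy : y ⬝ᵥ (B *ᵥ y) = maxEig B * (y ⬝ᵥ y) := by
    have h4 : y ⬝ᵥ (B *ᵥ y) ≤ maxEig B * (y ⬝ᵥ y) := rayleigh_le hBH hn0 y
    have h5 : maxEig B * (y ⬝ᵥ y) ≤ y ⬝ᵥ (B *ᵥ y) := by
      rw [hyy, ← hxBx]; exact hxBy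
    linarith
  have hBy : B *ᵥ y = maxEig B • y := eigstep y hyBy
  -- zero propagates along edges
  have step : ∀ i, y i = 0 → ∀ k, G.Adj i k → y k = 0 := by
    intro i hyi k hik
    have hrow : ∑ k', B i k' * y k' = maxEig B * y i := by
      have := congrFun hBy i
      simpa [Matrix.mulVec, dotProduct] using this
    rw [hyi, mul_zero] at hrow
    have hterms : ∀ k' ∈ Finset.univ, 0 ≤ B i k' * (y k') := by
      intro k' _
      by_cases h : i = k'
      · subst h; rw [hyi, mul_zero]
      · exact mul_nonneg (hBoff i k' h) (abs_nonneg _)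
    have hall := (Finset.sum_eq_zero_iff_of_nonneg hterms).mp hrow
    have hk := hall k (Finset.mem_univ k)
    rw [hBadj i k hik, one_mul] at hk
    exact hk
  -- zero propagates along walks, hence everywhere by connectivity
  have walkstep : ∀ (u v : Fin n), G.Walk u v → y u = 0 → y v = 0 := by
    intro u v w
    induction w with
    | nil => exact id
    | cons h p ih => intro hu; exact ih (step _ hu _ h)
  have hy0 : ∀ i, y i = 0 := fun i => walkstep j i (hG j i).some hyj
  have : y ⬝ᵥ y = 0 := by
    simp only [dotProduct]
    exact Finset.sum_eq_zero fun i _ => by rw [hy0 i, mul_zero]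
  rw [hyy] at this
  exact absurd this (ne_of_gt hpos)
end

section
/- Let d ≥ 3, let A be the adjacency matrix of the cycle C_d on vertices 1,…,d, fix a vertex j, and let A′ = A + I − 2·e_j e_jᵀ (the cycle with a loop of weight +1 at every vertex except a loop of weight −1 at j). Then the largest eigenvalue of A′ satisfies λ₁(A′) ≥ 2cos(π/(d+2)) + 1 + [ sin²(π/(d+2)) · (2cos(π/(d+2)) − 2) ] / [ (d+1)/2 + cos(2π/(d+2))/2 ]. -/
open scoped Classical

/-- The cycle graph `C_d` on vertex set `ℤ_d`. -/
def cycleGr (d : ℕ) : SimpleGraph (ZMod d) where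
  Adj u v := u ≠ v ∧ (v = u + 1 ∨ u = v + 1)
  symm := ⟨fun u v h => ⟨h.1.symm, h.2.symm⟩⟩
  loopless := ⟨fun u h => h.1 rfl⟩

section aux

open Real Finset

lemma tel1R (θ : ℝ) (n : ℕ) :
    ∑ k ∈ range n, 2 * Real.sin θ * Real.cos ((2*k+2)*θ) = Real.sin ((2*n+1)*θ) - Real.sin θ := by
  have h := Finset.sum_range_sub (fun k => Real.sin ((2*k+1)*θ)) n
  have : ∑ k ∈ range n, 2 * Real.sin θ * Real.cos ((2*(k:ℝ)+2)*θ)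
      = ∑ k ∈ range n, (Real.sin ((2*((k:ℝ)+1)+1)*θ) - Real.sin ((2*(k:ℝ)+1)*θ)) := by
    apply Finset.sum_congr rfl
    intro k _
    rw [Real.sin_sub_sin]
    ring_nf
  rw [this]
  convert h using 2 with k hk
  · push_cast; ring_nf
  · push_cast; ring_nf

lemma tel2R (θ : ℝ) (n : ℕ) :
    ∑ k ∈ range n, 2 * Real.sin θ * Real.cos ((2*k+3)*θ) = Real.sin ((2*n+2)*θ) - Real.sin (2*θ) := by
  have h := Finset.sum_range_sub (fun k => Real.sin ((2*k+2)*θ)) n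
  have : ∑ k ∈ range n, 2 * Real.sin θ * Real.cos ((2*(k:ℝ)+3)*θ)
      = ∑ k ∈ range n, (Real.sin ((2*((k:ℝ)+1)+2)*θ) - Real.sin ((2*(k:ℝ)+2)*θ)) := by
    apply Finset.sum_congr rfl
    intro k _
    rw [Real.sin_sub_sin]
    ring_nf
  rw [this]
  convert h using 2 with k hk
  · push_cast; ring_nf
  · push_cast; ring_nf

lemma sumsqR (d : ℕ) (hd : 3 ≤ d) :
    ∑ k ∈ range d, Real.sin (((k:ℝ)+1)*(Real.pi/(d+2)))^2
      = ((d:ℝ)+2)/2 - Real.sin (Real.pi/(d+2))^2 := by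
  set θ := Real.pi/((d:ℝ)+2) with hθ
  have hd2 : (0:ℝ) < (d:ℝ) + 2 := by positivity
  have hθpos : 0 < θ := div_pos Real.pi_pos hd2
  have hθlt : θ < Real.pi := by
    rw [hθ, div_lt_iff₀ hd2]
    have : (1:ℝ) ≤ (d:ℝ) := by exact_mod_cast le_trans (by norm_num) hd
    nlinarith [Real.pi_pos]
  have hs : 0 < Real.sin θ := Real.sin_pos_of_pos_of_lt_pi hθpos hθlt
  have h2d1 : (2*(d:ℝ)+1)*θ = 2*Real.pi - 3*θ := by
    rw [hθ]; field_simp; ring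
  have ht := tel1R θ d
  rw [h2d1, Real.sin_two_pi_sub, Real.sin_three_mul] at ht
  have expand : (2*Real.sin θ) * ∑ k ∈ range d, Real.sin (((k:ℝ)+1)*θ)^2
      = (d:ℝ)*Real.sin θ - (1/2) * ∑ k ∈ range d, 2*Real.sin θ*Real.cos ((2*(k:ℝ)+2)*θ) := by
    rw [Finset.mul_sum, Finset.mul_sum,
      show ((d:ℝ)*Real.sin θ) = ∑ _k ∈ range d, Real.sin θ by
        rw [Finset.sum_const, Finset.card_range, nsmul_eq_mul],
      ← Finset.sum_sub_distrib]
    apply Finset.sum_congr rfl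
    intro k _
    have : Real.sin (((k:ℝ)+1)*θ)^2 = 1/2 - Real.cos (2*(((k:ℝ)+1)*θ))/2 :=
      Real.sin_sq_eq_half_sub _
    rw [this, show 2*(((k:ℝ)+1)*θ) = (2*(k:ℝ)+2)*θ by ring]
    ring
  rw [ht] at expand
  have hne : (2*Real.sin θ) ≠ 0 := by positivity
  apply mul_left_cancel₀ hne
  rw [expand]
  ring

lemma sumTR (d : ℕ) (hd : 3 ≤ d) :
    ∑ k ∈ range (d-1), Real.sin (((k:ℝ)+1)*(Real.pi/(d+2))) * Real.sin (((k:ℝ)+2)*(Real.pi/(d+2)))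
      = Real.cos (Real.pi/(d+2)) * (((d:ℝ)+2) - 4*Real.sin (Real.pi/(d+2))^2)/2 := by
  set θ := Real.pi/((d:ℝ)+2) with hθ
  have hd2 : (0:ℝ) < (d:ℝ) + 2 := by positivity
  have hθpos : 0 < θ := div_pos Real.pi_pos hd2
  have hθlt : θ < Real.pi := by
    rw [hθ, div_lt_iff₀ hd2]
    have : (1:ℝ) ≤ (d:ℝ) := by exact_mod_cast le_trans (by norm_num) hd
    nlinarith [Real.pi_pos]
  have hs : 0 < Real.sin θ := Real.sin_pos_of_pos_of_lt_pi hθpos hθlt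
  have hcast : ((d-1:ℕ):ℝ) = (d:ℝ) - 1 := by
    have : 1 ≤ d := le_trans (by norm_num) hd
    push_cast [this]; ring
  have ht := tel2R θ (d-1)
  rw [hcast, show (2*((d:ℝ)-1)+2)*θ = 2*Real.pi - 4*θ by rw [hθ]; field_simp; ring,
    Real.sin_two_pi_sub,
    show (4:ℝ)*θ = 2*(2*θ) by ring, Real.sin_two_mul (2*θ), Real.sin_two_mul θ,
    Real.cos_two_mul θ] at ht
  have expand : (2*Real.sin θ) * ∑ k ∈ range (d-1),
        Real.sin (((k:ℝ)+1)*θ) * Real.sin (((k:ℝ)+2)*θ)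
      = ((d:ℝ)-1)*(Real.sin θ*Real.cos θ)
        - (1/2) * ∑ k ∈ range (d-1), 2*Real.sin θ*Real.cos ((2*(k:ℝ)+3)*θ) := by
    rw [Finset.mul_sum, Finset.mul_sum,
      show (((d:ℝ)-1)*(Real.sin θ*Real.cos θ)) = ∑ _k ∈ range (d-1), Real.sin θ*Real.cos θ by
        rw [Finset.sum_const, Finset.card_range, nsmul_eq_mul, hcast],
      ← Finset.sum_sub_distrib]
    apply Finset.sum_congr rfl
    intro k _
    have hp : Real.sin (((k:ℝ)+1)*θ) * Real.sin (((k:ℝ)+2)*θ)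
        = (Real.cos ((((k:ℝ)+1)*θ) - (((k:ℝ)+2)*θ)) - Real.cos ((((k:ℝ)+1)*θ) + (((k:ℝ)+2)*θ)))/2 := by
      rw [Real.cos_sub, Real.cos_add]; ring
    rw [hp, show (((k:ℝ)+1)*θ) - (((k:ℝ)+2)*θ) = -θ by ring, Real.cos_neg,
      show (((k:ℝ)+1)*θ) + (((k:ℝ)+2)*θ) = (2*(k:ℝ)+3)*θ by ring]
    ring
  rw [ht] at expand
  have hne : (2*Real.sin θ) ≠ 0 := by positivity
  apply mul_left_cancel₀ hne
  rw [expand]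
  linear_combination (4*Real.sin θ*Real.cos θ) * (Real.sin_sq_add_cos_sq θ)

open Matrix

lemma rayleigh_le_s5 {n : Type*} [Fintype n] [DecidableEq n] {M : Matrix n n ℝ} (hM : M.IsHermitian)
    {μ : ℝ} (h : ∀ i, hM.eigenvalues i ≤ μ) (x : n → ℝ) :
    x ⬝ᵥ M *ᵥ x ≤ μ * (x ⬝ᵥ x) := by
  set U : Matrix n n ℝ := (hM.eigenvectorUnitary : Matrix n n ℝ) with hU
  have hUU : U * star U = 1 := (Matrix.mem_unitaryGroup_iff).mp (hM.eigenvectorUnitary).2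
  have key : μ • (1 : Matrix n n ℝ) - M
      = U * Matrix.diagonal (fun i => μ - hM.eigenvalues i) * star U := by
    nth_rewrite 1 [hM.spectral_theorem]
    have hd : Matrix.diagonal (fun i => μ - hM.eigenvalues i)
        = μ • (1 : Matrix n n ℝ) - Matrix.diagonal ((RCLike.ofReal : ℝ → ℝ) ∘ hM.eigenvalues) := by
      rw [Matrix.smul_one_eq_diagonal, ← Matrix.diagonal_sub]
      rfl
    rw [hd, Matrix.mul_sub, Matrix.sub_mul, Matrix.mul_smul, Matrix.mul_one, Matrix.smul_mul, hUU]
    rw [Unitary.conjStarAlgAut_apply]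
  have hPSD : (μ • (1 : Matrix n n ℝ) - M).PosSemidef := by
    rw [key]
    exact (Matrix.PosSemidef.diagonal (fun i => sub_nonneg.mpr (h i))).mul_mul_conjTranspose_same U
  have h2 := hPSD.dotProduct_mulVec_nonneg x
  simp only [star_trivial] at h2
  rw [Matrix.sub_mulVec, Matrix.smul_mulVec, Matrix.one_mulVec, dotProduct_sub,
    dotProduct_smul] at h2
  have := sub_nonneg.mp h2
  simpa [smul_eq_mul] using this

lemma eig_le_getD {V : Type*} [Fintype V] [DecidableEq V] {A : Matrix V V ℝ}
    (hA : A.IsHermitian) (i : V) :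
    hA.eigenvalues i ≤ (eigList A).getD (Fintype.card V - 1) 0 := by
  have hcard : 1 ≤ Fintype.card V := Fintype.card_pos_iff.mpr ⟨i⟩
  rw [eigList, dif_pos hA]
  set l : List ℝ := (Finset.univ.val.map hA.eigenvalues).sort (· ≤ ·) with hl
  have hlen : l.length = Fintype.card V := by
    rw [hl, Multiset.length_sort, Multiset.card_map]
    rfl
  have hmem : hA.eigenvalues i ∈ l := by
    rw [hl, Multiset.mem_sort]
    exact Multiset.mem_map_of_mem _ (Finset.mem_univ_val i)
  have hsor : l.Pairwise (· ≤ ·) := Multiset.pairwise_sort _ _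
  obtain ⟨k, hget⟩ := List.mem_iff_get.mp hmem
  have hidx : Fintype.card V - 1 < l.length := by omega
  rw [List.getD_eq_getElem l 0 hidx,
    show l[Fintype.card V - 1] = l.get ⟨Fintype.card V - 1, hidx⟩ from rfl, ← hget]
  apply hsor.rel_get_of_le
  have := k.2
  simp only [Fin.le_def]
  omega

lemma sum_zmodR (d : ℕ) [NeZero d] (f : ZMod d → ℝ) :
    ∑ v : ZMod d, f v = ∑ k ∈ Finset.range d, f (k : ZMod d) := by
  apply Finset.sum_nbij' (i := fun v : ZMod d => v.val) (j := fun k : ℕ => (k : ZMod d))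
  · intro a _; exact Finset.mem_range.mpr (ZMod.val_lt a)
  · intro a _; exact Finset.mem_univ _
  · intro a _; exact ZMod.natCast_zmod_val a
  · intro a ha; exact ZMod.val_natCast_of_lt (Finset.mem_range.mp ha)
  · intro a _; rw [ZMod.natCast_zmod_val a]

lemma nbrFinset (d : ℕ) (hd : 3 ≤ d) [NeZero d] (v : ZMod d) :
    (cycleGr d).neighborFinset v = {v + 1, v - 1} := by
  have h1 : (1 : ZMod d) ≠ 0 := by
    intro h
    rw [show (1:ZMod d) = ((1:ℕ):ZMod d) by norm_cast] at h
    have := (ZMod.natCast_eq_zero_iff 1 d).mp h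
    have := Nat.le_of_dvd (by norm_num) this
    omega
  ext u
  rw [SimpleGraph.mem_neighborFinset]
  show v ≠ u ∧ (u = v + 1 ∨ v = u + 1) ↔ _
  simp only [Finset.mem_insert, Finset.mem_singleton]
  constructor
  · rintro ⟨hne, h | h⟩
    · exact Or.inl h
    · right; rw [h]; ring
  · rintro (h | h)
    · refine ⟨?_, Or.inl h⟩
      rw [h]; intro hh
      exact h1 (by linear_combination -hh)
    · refine ⟨?_, Or.inr ?_⟩
      · rw [h]; intro hh
        exact h1 (by linear_combination hh)
      · rw [h]; ring

end aux

open Matrix in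
/-- Let `d ≥ 3`, let `A` be the adjacency matrix of the cycle `C_d`, fix a vertex `j`,
and let `A′ = A + I − 2 eⱼeⱼᵀ` (the cycle with a `+1` loop at every vertex except a
`−1` loop at `j`).  Then
`λ₁(A′) ≥ 2cos(π/(d+2)) + 1 + sin²(π/(d+2))(2cos(π/(d+2)) − 2)/((d+1)/2 + cos(2π/(d+2))/2)`. -/
theorem cycle_oneNegLoop_maxEig_lower_bound (d : ℕ) [NeZero d] (hd : 3 ≤ d)
    (j : ZMod d) :
    2 * Real.cos (Real.pi / (d + 2)) + 1 +
        Real.sin (Real.pi / (d + 2)) ^ 2 * (2 * Real.cos (Real.pi / (d + 2)) - 2) /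
          (((d : ℝ) + 1) / 2 + Real.cos (2 * Real.pi / (d + 2)) / 2) ≤
      (eigList ((cycleGr d).adjMatrix ℝ + 1 - Matrix.single j j (2 : ℝ))).getD
        (d - 1) 0 := by
  set θ := Real.pi / ((d:ℝ) + 2) with hθ
  have hd2 : (0:ℝ) < (d:ℝ) + 2 := by positivity
  have hθpos : 0 < θ := div_pos Real.pi_pos hd2
  have hθlt : θ < Real.pi := by
    rw [hθ, div_lt_iff₀ hd2]
    have : (1:ℝ) ≤ (d:ℝ) := by exact_mod_cast le_trans (by norm_num) hd
    nlinarith [Real.pi_pos]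
  have hs : 0 < Real.sin θ := Real.sin_pos_of_pos_of_lt_pi hθpos hθlt
  set M := (cycleGr d).adjMatrix ℝ + 1 - Matrix.single j j (2 : ℝ) with hM
  have hHerm : M.IsHermitian := by
    apply Matrix.IsHermitian.sub
    · apply Matrix.IsHermitian.add _ Matrix.isHermitian_one
      show _ᴴ = _
      ext a b
      simp only [Matrix.conjTranspose_apply, SimpleGraph.adjMatrix_apply, star_trivial]
      rw [SimpleGraph.adj_comm]
    · show _ᴴ = _
      ext a b
      simp only [Matrix.conjTranspose_apply, Matrix.single, Matrix.of_apply, star_trivial]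
      exact if_congr and_comm rfl rfl
  set x : ZMod d → ℝ := fun v => Real.sin ((((v - j).val : ℝ) + 1) * θ) with hx
  have hxval : ∀ k : ℕ, k < d → x (j + (k : ZMod d)) = Real.sin (((k:ℝ)+1)*θ) := by
    intro k hk
    simp only [hx]
    rw [add_sub_cancel_left, ZMod.val_natCast_of_lt hk]
  have hxj : x j = Real.sin θ := by
    simp only [hx, sub_self, ZMod.val_zero]
    norm_num
  -- the norm of the test vector
  have hN : x ⬝ᵥ x = ((d:ℝ)+2)/2 - Real.sin θ^2 := by
    rw [dotProduct, ← Equiv.sum_comp (Equiv.addLeft j) (fun v => x v * x v),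
      ← sumsqR d hd]
    simp only [Equiv.coe_addLeft]
    rw [sum_zmodR d (fun w => x (j + w) * x (j + w))]
    apply Finset.sum_congr rfl
    intro k hk
    rw [hxval k (Finset.mem_range.mp hk), ← hθ, sq]
  -- contribution of the basis matrix
  have hstd : x ⬝ᵥ (Matrix.single j j (2:ℝ)) *ᵥ x = 2 * Real.sin θ^2 := by
    rw [Matrix.single_mulVec, dotProduct]
    rw [Finset.sum_eq_single j]
    · rw [Function.update_self, hxj]; ring
    · intro b _ hb
      rw [Function.update_of_ne hb]
      simp
    · intro h; exact absurd (Finset.mem_univ j) h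
  -- some ZMod facts
  have hdvd : ∀ m : ℕ, 0 < m → m < 3 → ((m:ℕ) : ZMod d) ≠ 0 := by
    intro m hm hm3 h
    have := (ZMod.natCast_eq_zero_iff m d).mp h
    have := Nat.le_of_dvd hm this
    omega
  -- the cycle part
  have hadj : x ⬝ᵥ ((cycleGr d).adjMatrix ℝ) *ᵥ x = ((d:ℝ)+2) * Real.cos θ := by
    have hmv : ∀ v, (((cycleGr d).adjMatrix ℝ) *ᵥ x) v = x (v+1) + x (v-1) := by
      intro v
      rw [SimpleGraph.adjMatrix_mulVec_apply, nbrFinset d hd v, Finset.sum_pair]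
      intro h
      have h2 : ((2:ℕ) : ZMod d) = 0 := by
        push_cast
        linear_combination h
      exact hdvd 2 (by norm_num) (by norm_num) h2
    rw [dotProduct]
    simp only [hmv]
    have split : ∑ v : ZMod d, x v * (x (v+1) + x (v-1))
        = ∑ v : ZMod d, x v * x (v+1) + ∑ v : ZMod d, x v * x (v-1) := by
      rw [← Finset.sum_add_distrib]
      apply Finset.sum_congr rfl
      intro v _; ring
    have refl : ∑ v : ZMod d, x v * x (v-1) = ∑ v : ZMod d, x v * x (v+1) := by
      rw [← Equiv.sum_comp (Equiv.addRight (1:ZMod d)) (fun v => x v * x (v-1))]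
      apply Finset.sum_congr rfl
      intro v _
      simp only [Equiv.coe_addRight, add_sub_cancel_right]
      ring
    have hS : ∑ v : ZMod d, x v * x (v+1) = ((d:ℝ)+2) * Real.cos θ / 2 := by
      rw [← Equiv.sum_comp (Equiv.addLeft j) (fun v => x v * x (v+1))]
      simp only [Equiv.coe_addLeft]
      rw [sum_zmodR d (fun w => x (j + w) * x (j + w + 1))]
      rw [show Finset.range d = Finset.range ((d-1)+1) by rw [Nat.sub_add_cancel (by omega)]]
      rw [Finset.sum_range_succ]
      have hmain : ∑ k ∈ Finset.range (d-1), x (j + (k:ZMod d)) * x (j + (k:ZMod d) + 1)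
          = Real.cos θ * (((d:ℝ)+2) - 4*Real.sin θ^2)/2 := by
        have hsum := sumTR d hd
        rw [← hθ] at hsum
        rw [← hsum]
        apply Finset.sum_congr rfl
        intro k hk
        have hk' : k < d - 1 := Finset.mem_range.mp hk
        have h1 : x (j + (k:ZMod d)) = Real.sin (((k:ℝ)+1)*θ) := hxval k (by omega)
        have h2 : x (j + (k:ZMod d) + 1) = Real.sin (((k:ℝ)+2)*θ) := by
          have : (j + (k:ZMod d) + 1) = j + (((k+1:ℕ)):ZMod d) := by push_cast; ring
          rw [this, hxval (k+1) (by omega)]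
          push_cast; ring_nf
        rw [h1, h2]
      have hlast : x (j + ((d-1:ℕ):ZMod d)) * x (j + ((d-1:ℕ):ZMod d) + 1)
          = (2 * Real.sin θ * Real.cos θ) * Real.sin θ := by
        have h1 : x (j + ((d-1:ℕ):ZMod d)) = Real.sin ((d:ℝ)*θ) := by
          rw [hxval (d-1) (by omega)]
          congr 1
          have : ((d-1:ℕ):ℝ) = (d:ℝ) - 1 := by
            have : 1 ≤ d := by omega
            push_cast [this]; ring
          rw [this]; ring
        have h2 : (j + ((d-1:ℕ):ZMod d) + 1) = j := by
          have : ((d-1:ℕ):ZMod d) + 1 = ((d:ℕ):ZMod d) := by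
            rw [show (1:ZMod d) = ((1:ℕ):ZMod d) by norm_cast, ← Nat.cast_add,
              Nat.sub_add_cancel (by omega)]
          rw [add_assoc, this, ZMod.natCast_self, add_zero]
        have hsind : Real.sin ((d:ℝ)*θ) = 2 * Real.sin θ * Real.cos θ := by
          rw [show (d:ℝ)*θ = Real.pi - 2*θ by rw [hθ]; field_simp; ring,
            Real.sin_pi_sub, Real.sin_two_mul]
        rw [h1, h2, hxj, hsind]
      rw [hmain, hlast]
      ring
    rw [split, refl, hS]
    ring
  -- full quadratic form
  have hQ : x ⬝ᵥ M *ᵥ x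
      = ((d:ℝ)+2) * Real.cos θ + (((d:ℝ)+2)/2 - Real.sin θ^2) - 2 * Real.sin θ^2 := by
    rw [hM, Matrix.sub_mulVec, Matrix.add_mulVec, Matrix.one_mulVec, dotProduct_sub,
      dotProduct_add, hadj, hstd, hN]
  -- Rayleigh bound
  set μ := (eigList M).getD (d - 1) 0 with hμ
  have hray : x ⬝ᵥ M *ᵥ x ≤ μ * (x ⬝ᵥ x) := by
    apply rayleigh_le_s5 hHerm
    intro i
    have := eig_le_getD hHerm i
    rwa [ZMod.card d] at this
  rw [hN, hQ] at hray
  -- final arithmetic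
  have hD : ((d : ℝ) + 1) / 2 + Real.cos (2 * Real.pi / (d + 2)) / 2
      = ((d:ℝ)+2)/2 - Real.sin θ^2 := by
    rw [show 2 * Real.pi / ((d:ℝ) + 2) = 2 * θ by rw [hθ]; ring, Real.cos_two_mul]
    linear_combination Real.sin_sq_add_cos_sq θ
  have hNpos : (0:ℝ) < ((d:ℝ)+2)/2 - Real.sin θ^2 := by
    have h1 : Real.sin θ^2 ≤ 1 := Real.sin_sq_le_one θ
    have h3 : (3:ℝ) ≤ (d:ℝ) := by exact_mod_cast hd
    nlinarith
  rw [hD]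
  have hkey : 2 * Real.cos θ + 1 +
      Real.sin θ ^ 2 * (2 * Real.cos θ - 2) / (((d:ℝ)+2)/2 - Real.sin θ^2)
      = (((d:ℝ)+2) * Real.cos θ + (((d:ℝ)+2)/2 - Real.sin θ^2) - 2 * Real.sin θ^2)
        / (((d:ℝ)+2)/2 - Real.sin θ^2) := by
    rw [eq_div_iff (ne_of_gt hNpos), add_mul, div_mul_cancel₀ _ (ne_of_gt hNpos)]
    ring
  rw [hkey, div_le_iff₀ hNpos]
  linarith [hray]
end

section
/- For all integers k ≥ 2 and ℓ ≥ 1, the diameter of the CLEX graph C(k,ℓ) is exactly ℓ: every pair of vertices is joined by a path of length at most ℓ, and for any i ≠ j in [k] the vertices (i,i,…,i) and (j,j,…,j) are at distance exactly ℓ. -/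
open scoped Classical

/-- The (directed description of the) edges of the CLEX graph `C(k,ℓ)` on vertex set
`[k]^ℓ` (coordinates indexed `0,…,ℓ−1`, coordinate `ℓ−1` being the "copy" index of the
recursion).  Unfolding the recursive definition, the edges are:
* clique edges: the two endpoints agree on all coordinates except coordinate `0`;
* cross edges at level `i` (for `i+1 < ℓ`): the endpoints agree on all coordinates
  `< i` and `> i+1`, the `(i+1)`-st coordinate of one endpoint equals the `i`-th
  coordinate of the other, and the remaining two coordinates are arbitrary. -/
def clexRel (k ℓ : ℕ) (u w : Fin ℓ → Fin k) : Prop :=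
  (∀ m : Fin ℓ, (m : ℕ) ≠ 0 → u m = w m) ∨
  (∃ i j : Fin ℓ, (j : ℕ) = (i : ℕ) + 1 ∧
    (∀ m : Fin ℓ, (m : ℕ) < (i : ℕ) → u m = w m) ∧
    (∀ m : Fin ℓ, (j : ℕ) < (m : ℕ) → u m = w m) ∧
    w j = u i)

/-- The CLEX graph `C(k,ℓ)` (self-loops discarded). -/
def clex (k ℓ : ℕ) : SimpleGraph (Fin ℓ → Fin k) where
  Adj u w := u ≠ w ∧ (clexRel k ℓ u w ∨ clexRel k ℓ w u)
  symm := ⟨fun u w h => ⟨h.1.symm, h.2.symm⟩⟩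
  loopless := ⟨fun u h => h.1 rfl⟩

/-- Potential function: the number of coordinates equal to `j`. -/
noncomputable def clexPhi {k ℓ : ℕ} (j : Fin k) (v : Fin ℓ → Fin k) : ℕ :=
  (Finset.univ.filter (fun m => v m = j)).card

lemma clexPhi_rel {k ℓ : ℕ} (j : Fin k) {a b : Fin ℓ → Fin k}
    (h : clexRel k ℓ a b) :
    clexPhi j b ≤ clexPhi j a + 1 ∧ clexPhi j a ≤ clexPhi j b + 1 := by
  classical
  simp only [clexPhi]
  set Sa := Finset.univ.filter (fun m => a m = j) with hSa
  set Sb := Finset.univ.filter (fun m => b m = j) with hSb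
  rcases h with h | ⟨i, jj, hij, hlt, hgt, hkey⟩
  · -- clique edge: differs only at coordinate 0
    set T : Finset (Fin ℓ) := Finset.univ.filter (fun m => (m : ℕ) = 0) with hT
    have hTcard : T.card ≤ 1 := by
      apply Finset.card_le_one.mpr
      intro x hx y hy
      simp only [hT, Finset.mem_filter] at hx hy
      exact Fin.ext (hx.2.trans hy.2.symm)
    have hdiff : Sa \ T = Sb \ T := by
      ext m
      simp only [hSa, hSb, hT, Finset.mem_sdiff, Finset.mem_filter, Finset.mem_univ,
        true_and]
      constructor
      · rintro ⟨h1, h2⟩; exact ⟨(h m h2).symm.trans h1, h2⟩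
      · rintro ⟨h1, h2⟩; exact ⟨(h m h2).trans h1, h2⟩
    have e1 := Finset.card_sdiff_add_card_inter Sa T
    have e2 := Finset.card_sdiff_add_card_inter Sb T
    rw [hdiff] at e1
    have ha : (Sa ∩ T).card ≤ 1 :=
      le_trans (Finset.card_le_card Finset.inter_subset_right) hTcard
    have hb : (Sb ∩ T).card ≤ 1 :=
      le_trans (Finset.card_le_card Finset.inter_subset_right) hTcard
    exact ⟨by omega, by omega⟩
  · -- cross edge at level i
    have hne : i ≠ jj := by
      intro h; rw [h] at hij; omega
    set T : Finset (Fin ℓ) := {i, jj} with hT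
    have hdiff : Sa \ T = Sb \ T := by
      ext m
      simp only [hSa, hSb, hT, Finset.mem_sdiff, Finset.mem_filter, Finset.mem_univ,
        true_and, Finset.mem_insert, Finset.mem_singleton]
      have hab : m ≠ i ∧ m ≠ jj → a m = b m := by
        rintro ⟨h1, h2⟩
        have hv1 : (m : ℕ) ≠ (i : ℕ) := fun h => h1 (Fin.ext h)
        have hv2 : (m : ℕ) ≠ (jj : ℕ) := fun h => h2 (Fin.ext h)
        rcases lt_or_gt_of_ne hv1 with h | h
        · exact hlt m h
        · exact hgt m (by omega)
      constructor
      · rintro ⟨h1, h2⟩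
        push_neg at h2
        exact ⟨(hab h2).symm.trans h1, by tauto⟩
      · rintro ⟨h1, h2⟩
        push_neg at h2
        exact ⟨(hab h2).trans h1, by tauto⟩
    have hinterA : (Sa ∩ T).card =
        (if a i = j then 1 else 0) + (if a jj = j then 1 else 0) := by
      have : Sa ∩ T = T.filter (fun m => a m = j) := by
        ext m
        simp only [hSa, hT, Finset.mem_inter, Finset.mem_filter, Finset.mem_univ,
          true_and]
        tauto
      rw [this, Finset.card_filter, hT, Finset.sum_pair hne]
    have hinterB : (Sb ∩ T).card =
        (if b i = j then 1 else 0) + (if b jj = j then 1 else 0) := by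
      have : Sb ∩ T = T.filter (fun m => b m = j) := by
        ext m
        simp only [hSb, hT, Finset.mem_inter, Finset.mem_filter, Finset.mem_univ,
          true_and]
        tauto
      rw [this, Finset.card_filter, hT, Finset.sum_pair hne]
    have hkey' : (if b jj = j then 1 else 0) = (if a i = j then 1 else 0) := by
      rw [hkey]
    have e1 := Finset.card_sdiff_add_card_inter Sa T
    have e2 := Finset.card_sdiff_add_card_inter Sb T
    rw [hinterA] at e1
    rw [hinterB, hkey'] at e2
    rw [hdiff] at e1
    refine ⟨?_, ?_⟩ <;> (split_ifs at e1 e2 <;> omega)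

lemma clexPhi_adj {k ℓ : ℕ} (j : Fin k) {a b : Fin ℓ → Fin k}
    (h : (clex k ℓ).Adj a b) : clexPhi j b ≤ clexPhi j a + 1 := by
  rcases h.2 with h | h
  · exact (clexPhi_rel j h).1
  · exact (clexPhi_rel j h).2

lemma clexPhi_walk {k ℓ : ℕ} (j : Fin k) {a b : Fin ℓ → Fin k}
    (p : (clex k ℓ).Walk a b) : clexPhi j b ≤ clexPhi j a + p.length := by
  induction p with
  | nil => simp
  | cons h p ih =>
    have := clexPhi_adj j h
    simp only [SimpleGraph.Walk.length_cons]
    omega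

lemma walk_of_chain {V : Type*} (G : SimpleGraph V) (f : ℕ → V) :
    ∀ n, (∀ t < n, f t = f (t+1) ∨ G.Adj (f t) (f (t+1))) →
    ∃ p : G.Walk (f 0) (f n), p.length ≤ n := by
  intro n
  induction n with
  | zero => intro _; exact ⟨SimpleGraph.Walk.nil, le_refl 0⟩
  | succ n ih =>
    intro h
    obtain ⟨p, hp⟩ := ih (fun t ht => h t (by omega))
    rcases h n (by omega) with heq | hadj
    · exact ⟨p.copy rfl heq, by simpa using Nat.le_succ_of_le hp⟩
    · exact ⟨p.concat hadj, by rw [SimpleGraph.Walk.length_concat]; omega⟩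

/-- For `k ≥ 2` and `ℓ ≥ 1` the diameter of the CLEX graph `C(k,ℓ)` is exactly `ℓ`:
every pair of vertices is joined by a path of length at most `ℓ`, and the constant
vertices `(i,…,i)` and `(j,…,j)` with `i ≠ j` are at distance exactly `ℓ`. -/
theorem clex_diameter (k ℓ : ℕ) (hk : 2 ≤ k) (hl : 1 ≤ ℓ) :
    (∀ u w : Fin ℓ → Fin k, (clex k ℓ).Reachable u w ∧ (clex k ℓ).dist u w ≤ ℓ) ∧
    (∀ i j : Fin k, i ≠ j →
      (clex k ℓ).dist (fun _ => i) (fun _ => j) = ℓ) := by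
  have upper : ∀ u w : Fin ℓ → Fin k,
      (clex k ℓ).Reachable u w ∧ (clex k ℓ).dist u w ≤ ℓ := by
    intro u w
    set f : ℕ → (Fin ℓ → Fin k) := fun t m =>
      if (m : ℕ) + t + 1 < ℓ then u m
      else if (m : ℕ) + t + 1 = ℓ then u ⟨ℓ - 1, by omega⟩
      else w m with hf
    have hf0 : f 0 = u := by
      funext m
      simp only [hf]
      split_ifs with h1 h2
      · rfl
      · have hm : m = ⟨ℓ - 1, by omega⟩ := Fin.ext (by simp only [Fin.val_mk]; omega)
        rw [hm]
      · exact absurd m.isLt (by omega)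
    have hfl : f ℓ = w := by
      funext m
      simp only [hf]
      split_ifs with h1 h2
      · omega
      · omega
      · rfl
    have hchain : ∀ t < ℓ, f t = f (t+1) ∨ (clex k ℓ).Adj (f t) (f (t+1)) := by
      intro t ht
      by_cases heq : f t = f (t+1)
      · exact Or.inl heq
      right
      refine ⟨heq, ?_⟩
      by_cases htop : t + 1 = ℓ
      · -- clique edge: the vertices agree off coordinate 0
        left
        left
        intro m hm
        simp only [hf]
        have h1 : ¬ ((m : ℕ) + t + 1 < ℓ) := by omega
        have h2 : ¬ ((m : ℕ) + t + 1 = ℓ) := by omega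
        have h3 : ¬ ((m : ℕ) + (t+1) + 1 < ℓ) := by omega
        have h4 : ¬ ((m : ℕ) + (t+1) + 1 = ℓ) := by omega
        rw [if_neg h1, if_neg h2, if_neg h3, if_neg h4]
      · -- cross edge at level ℓ - t - 2, with clexRel (f (t+1)) (f t)
        right
        right
        have ht2 : t + 2 ≤ ℓ := by omega
        refine ⟨⟨ℓ - t - 2, by omega⟩, ⟨ℓ - t - 1, by omega⟩, by simp; omega,
          ?_, ?_, ?_⟩
        · intro m hm
          simp only at hm
          simp only [hf]
          have h1 : (m : ℕ) + (t+1) + 1 < ℓ := by omega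
          have h2 : (m : ℕ) + t + 1 < ℓ := by omega
          rw [if_pos h1, if_pos h2]
        · intro m hm
          simp only at hm
          simp only [hf]
          have h1 : ¬ ((m : ℕ) + (t+1) + 1 < ℓ) := by omega
          have h2 : ¬ ((m : ℕ) + (t+1) + 1 = ℓ) := by omega
          have h3 : ¬ ((m : ℕ) + t + 1 < ℓ) := by omega
          have h4 : ¬ ((m : ℕ) + t + 1 = ℓ) := by omega
          rw [if_neg h1, if_neg h2, if_neg h3, if_neg h4]
        · simp only [hf]
          have h1 : ¬ ((ℓ - t - 1) + t + 1 < ℓ) := by omega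
          have h2 : (ℓ - t - 1) + t + 1 = ℓ := by omega
          have h3 : ¬ ((ℓ - t - 2) + (t+1) + 1 < ℓ) := by omega
          have h4 : (ℓ - t - 2) + (t+1) + 1 = ℓ := by omega
          simp [h1, h2, h3, h4]
    obtain ⟨p, hp⟩ := walk_of_chain (clex k ℓ) f ℓ hchain
    refine ⟨⟨p.copy hf0 hfl⟩, le_trans (SimpleGraph.dist_le (p.copy hf0 hfl)) ?_⟩
    rw [SimpleGraph.Walk.length_copy]
    exact hp
  refine ⟨upper, ?_⟩
  intro i j hij
  have hreach := (upper (fun _ => i) (fun _ => j)).1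
  have hle := (upper (fun _ => i) (fun _ => j)).2
  obtain ⟨p, hp⟩ := hreach.exists_walk_length_eq_dist
  have hwalk := clexPhi_walk j p
  have hphi_j : clexPhi j (fun _ : Fin ℓ => j) = ℓ := by
    simp [clexPhi]
  have hphi_i : clexPhi j (fun _ : Fin ℓ => i) = 0 := by
    simp [clexPhi, hij]
  rw [hphi_j, hphi_i, hp] at hwalk
  omega
end

section
/- Let k ≥ 1 and let M be the k²×k² real matrix indexed by pairs in [k]×[k] with entries M_{(i,j),(a,b)} = 2 if i = b and j = a; M_{(i,j),(a,b)} = 1 if exactly one of the conditions i = b, j = a holds; and M_{(i,j),(a,b)} = 0 otherwise. Then the spectrum of M is exactly the multiset { 2k with multiplicity 1, k with multiplicity k−1, −k with multiplicity k−1, 0 with multiplicity (k−1)² }. -/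
open scoped Classical

/-- The multiset of eigenvalues of a real symmetric matrix. -/
noncomputable def eigMultiset {V : Type*} [Fintype V] [DecidableEq V]
    (A : Matrix V V ℝ) : Multiset ℝ :=
  if h : A.IsHermitian then Finset.univ.val.map h.eigenvalues else 0

/-- The cross-connection matrix `M` of the CLEX topology: indexed by `[k] × [k]`, with
`M_{(i,j),(a,b)} = 2` if `i = b` and `j = a`, `= 1` if exactly one of these holds, and
`= 0` otherwise. -/
def crossM (k : ℕ) : Matrix (Fin k × Fin k) (Fin k × Fin k) ℝ :=
  fun p q => (if p.1 = q.2 then 1 else 0) + (if p.2 = q.1 then 1 else 0)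

open Polynomial Matrix Finset
set_option linter.unreachableTactic false
set_option linter.unusedTactic false
set_option linter.unnecessarySeqFocus false


variable {n : Type*} [Fintype n] [DecidableEq n]

lemma charpoly_diagonal_real (d : n → ℝ) :
    (Matrix.diagonal d).charpoly = ∏ i, (X - C (d i)) := by
  unfold Matrix.charpoly
  have h : charmatrix (Matrix.diagonal d) = Matrix.diagonal fun i => X - C (d i) := by
    ext i j
    by_cases hij : i = j
    · subst hij; simp [charmatrix_apply_eq]
    · rw [charmatrix_apply_ne _ _ _ hij, Matrix.diagonal_apply_ne _ hij,
        Matrix.diagonal_apply_ne _ hij, map_zero, neg_zero]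
  rw [h, Matrix.det_diagonal]

lemma charpoly_conj_real (A B P Q : Matrix n n ℝ) (hPQ : P * Q = 1)
    (h : A * P = P * B) : A.charpoly = B.charpoly := by
  have hdet : P.det * Q.det = 1 := by rw [← Matrix.det_mul, hPQ, Matrix.det_one]
  have hPd : P.det ≠ 0 := left_ne_zero_of_mul_eq_one hdet
  have key : charmatrix A * P.map C = P.map C * charmatrix B := by
    unfold charmatrix
    rw [sub_mul, mul_sub]
    congr 1
    · rw [Matrix.scalar_commute]
      intro r; exact Commute.all _ _
    · simp only [RingHom.mapMatrix_apply, ← Matrix.map_mul, h]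
  have h2 := congrArg Matrix.det key
  rw [Matrix.det_mul, Matrix.det_mul, ← RingHom.mapMatrix_apply, ← RingHom.map_det,
    mul_comm] at h2
  unfold Matrix.charpoly
  exact mul_left_cancel₀ (by simpa using hPd) h2

lemma eigMultiset_aux (A : Matrix n n ℝ) (h : A.IsHermitian) :
    (Finset.univ.val.map h.eigenvalues) = A.charpoly.roots := by
  set U : Matrix n n ℝ := (h.eigenvectorUnitary : Matrix n n ℝ) with hUdef
  have hU : U * star U = 1 := Matrix.mem_unitaryGroup_iff.mp h.eigenvectorUnitary.2
  have hAU : A * U = U * Matrix.diagonal h.eigenvalues := by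
    conv_lhs => rw [h.spectral_theorem, Unitary.conjStarAlgAut_apply]
    have : (RCLike.ofReal ∘ h.eigenvalues : n → ℝ) = h.eigenvalues := by
      ext i; simp
    rw [this, Matrix.mul_assoc, Matrix.mul_assoc]
    congr 1
    rw [Matrix.mem_unitaryGroup_iff'.mp h.eigenvectorUnitary.2, Matrix.mul_one]
  have hc := charpoly_conj_real A (Matrix.diagonal h.eigenvalues) U (star U) hU hAU
  rw [hc, charpoly_diagonal_real]
  have : (∏ i, (X - C (h.eigenvalues i))) =
      ((Finset.univ.val.map h.eigenvalues).map fun a => X - C a).prod := by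
    rw [Multiset.map_map]; rfl
  rw [this, Polynomial.roots_multiset_prod_X_sub_C]


namespace CrossAux

variable (m : ℕ)

/-- Basis-change matrix on `Fin (m+1)`: column 0 is all ones, column `c ≠ 0` is `e_c - e_0`. -/
def Tm : Matrix (Fin (m+1)) (Fin (m+1)) ℝ :=
  fun i c => if c = 0 then 1 else (if i = c then 1 else 0) - (if i = 0 then 1 else 0)

noncomputable def Tinv : Matrix (Fin (m+1)) (Fin (m+1)) ℝ :=
  fun c a => (if c = 0 then 0 else if a = c then 1 else 0) +
    (if c = 0 then 1 else -1) / (m+1)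

lemma hm1 : ((m:ℝ)+1) ≠ 0 := by positivity

lemma sum_Tm_col (c : Fin (m+1)) :
    (∑ i, Tm m i c) = if c = 0 then (m+1 : ℝ) else 0 := by
  by_cases hc : c = 0
  · simp [Tm, hc]
  · simp [Tm, hc, Finset.sum_sub_distrib]

lemma Tinv_mul_Tm : Tinv m * Tm m = 1 := by
  ext c a
  rw [Matrix.mul_apply]
  by_cases hc : c = 0
  · subst hc
    simp only [Tinv, if_true, zero_add]
    rw [← Finset.mul_sum, sum_Tm_col]
    by_cases ha : a = 0
    · subst ha; rw [if_pos rfl, Matrix.one_apply_eq]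
      field_simp
    · rw [if_neg ha, Matrix.one_apply_ne (Ne.symm ha), mul_zero]
  · simp only [Tinv, if_neg hc]
    have key : ∀ x : Fin (m+1), ((if x = c then (1:ℝ) else 0) + -1/(m+1)) * Tm m x a
        = (if x = c then Tm m x a else 0) + (-1/(m+1)) * Tm m x a := by
      intro x; by_cases h : x = c <;> simp [h, add_mul]
    rw [Finset.sum_congr rfl fun x _ => key x, Finset.sum_add_distrib,
      Finset.sum_ite_eq' Finset.univ c (fun x => Tm m x a), ← Finset.mul_sum, sum_Tm_col]
    by_cases ha : a = 0
    · subst ha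
      rw [if_pos rfl, Matrix.one_apply_ne hc]
      simp only [Tm, if_pos rfl, Finset.mem_univ, if_true]
      field_simp
      ring
    · rw [if_neg ha, mul_zero, add_zero, if_pos (Finset.mem_univ c), Tm]
      rw [if_neg ha, if_neg hc, sub_zero, Matrix.one_apply]

lemma Tm_mul_Tinv : Tm m * Tinv m = 1 :=
  mul_eq_one_comm.mp (Tinv_mul_Tm m)

end CrossAux

namespace CrossAux2
open CrossAux

variable (m : ℕ)

abbrev I2 (m : ℕ) := Fin (m+1) × Fin (m+1)

def Cm : Matrix (I2 m) (I2 m) ℝ :=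
  fun p q =>
    if q.1 = 0 then
      (if q.2 = 0 then (if p = ((0 : Fin (m+1)), (0 : Fin (m+1))) then 1 else 0)
       else (if p = (0, q.2) then 1 else 0) + (if p = (q.2, 0) then 1 else 0))
    else
      (if q.2 = 0 then (if p = (0, q.1) then 1 else 0) - (if p = (q.1, 0) then 1 else 0)
       else (if p = q then 1 else 0))

noncomputable def Cinv : Matrix (I2 m) (I2 m) ℝ :=
  fun p q =>
    if p.1 = 0 then
      (if p.2 = 0 then (if q = ((0 : Fin (m+1)), (0 : Fin (m+1))) then 1 else 0)
       else ((if q = (0, p.2) then 1 else 0) + (if q = (p.2, 0) then 1 else 0)) / 2)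
    else
      (if p.2 = 0 then ((if q = (0, p.1) then 1 else 0) - (if q = (p.1, 0) then 1 else 0)) / 2
       else (if q = p then 1 else 0))

lemma sum_ind_mul {α : Type*} [Fintype α] [DecidableEq α] (v : α) (f : α → ℝ) :
    ∑ r, (if r = v then (1:ℝ) else 0) * f r = f v := by
  simp [ite_mul]

lemma Cinv_mul_Cm : Cinv m * Cm m = 1 := by
  ext p q
  rw [Matrix.mul_apply]
  obtain ⟨a, b⟩ := p
  obtain ⟨c, d⟩ := q
  by_cases ha : a = 0
  · by_cases hb : b = 0
    · subst ha; subst hb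
      simp only [Cinv, if_true, if_pos rfl]
      rw [sum_ind_mul]
      by_cases hc : c = 0 <;> by_cases hd : d = 0 <;>
        simp [Cm, Matrix.one_apply, Prod.ext_iff, hc, hd, eq_comm] <;> (try split_ifs <;> simp_all) <;> (try norm_num)
    · subst ha
      simp only [Cinv, if_true, if_neg hb]
      have e1 : ∀ r : I2 m, ((if r = ((0:Fin (m+1)), b) then (1:ℝ) else 0) +
          (if r = (b, (0:Fin (m+1))) then 1 else 0)) / 2 * Cm m r (c, d)
          = ((if r = ((0:Fin (m+1)), b) then (1:ℝ) else 0) * Cm m r (c, d)) / 2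
            + ((if r = (b, (0:Fin (m+1))) then (1:ℝ) else 0) * Cm m r (c, d)) / 2 := by
        intro r; ring
      rw [Finset.sum_congr rfl fun r _ => e1 r, Finset.sum_add_distrib,
        ← Finset.sum_div, ← Finset.sum_div, sum_ind_mul, sum_ind_mul]
      by_cases hc : c = 0 <;> by_cases hd : d = 0 <;>
        simp [Cm, Matrix.one_apply, Prod.ext_iff, hc, hd, hb, eq_comm] <;> (try split_ifs <;> simp_all) <;> (try norm_num)
  · by_cases hb : b = 0
    · subst hb
      simp only [Cinv, if_neg ha, if_true, if_pos rfl]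
      have e1 : ∀ r : I2 m, ((if r = ((0:Fin (m+1)), a) then (1:ℝ) else 0) -
          (if r = (a, (0:Fin (m+1))) then 1 else 0)) / 2 * Cm m r (c, d)
          = ((if r = ((0:Fin (m+1)), a) then (1:ℝ) else 0) * Cm m r (c, d)) / 2
            - ((if r = (a, (0:Fin (m+1))) then (1:ℝ) else 0) * Cm m r (c, d)) / 2 := by
        intro r; ring
      rw [Finset.sum_congr rfl fun r _ => e1 r, Finset.sum_sub_distrib,
        ← Finset.sum_div, ← Finset.sum_div, sum_ind_mul, sum_ind_mul]
      by_cases hc : c = 0 <;> by_cases hd : d = 0 <;>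
        simp [Cm, Matrix.one_apply, Prod.ext_iff, hc, hd, ha, eq_comm] <;> (try split_ifs <;> simp_all) <;> (try norm_num)
    · simp only [Cinv, if_neg ha, if_neg hb]
      rw [sum_ind_mul]
      by_cases hc : c = 0 <;> by_cases hd : d = 0 <;>
        simp [Cm, Matrix.one_apply, Prod.ext_iff, hc, hd, ha, hb, eq_comm] <;> (try split_ifs <;> simp_all) <;> (try norm_num)


noncomputable def dfun : I2 m → ℝ := fun p =>
  if p.1 = 0 then (if p.2 = 0 then 2*(m+1) else (m+1)) else (if p.2 = 0 then -(m+1) else 0)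

noncomputable def Dm : Matrix (I2 m) (I2 m) ℝ := Matrix.diagonal (dfun m)

noncomputable def Nm : Matrix (I2 m) (I2 m) ℝ := fun p q =>
  (m+1 : ℝ) *
    (if q.1 = 0 then
      (if q.2 = 0 then (if p = ((0 : Fin (m+1)), (0 : Fin (m+1))) then 2 else 0)
       else (if p = (q.2, 0) then 1 else 0))
    else
      (if q.2 = 0 then (if p = (0, q.1) then 1 else 0) else 0))

open Kronecker

lemma sum_mul_ind {α : Type*} [Fintype α] [DecidableEq α] (v : α) (f : α → ℝ) (x : ℝ) :
    ∑ r, f r * (if r = v then x else 0) = f v * x := by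
  simp [mul_ite]

lemma crossM_mul_TT :
    crossM (m+1) * (Tm m ⊗ₖ Tm m) = (Tm m ⊗ₖ Tm m) * Nm m := by
  ext ⟨i, j⟩ ⟨c, d⟩
  rw [Matrix.mul_apply, Matrix.mul_apply]
  have lhs : ∀ a b : Fin (m+1),
      crossM (m+1) (i, j) (a, b) * (Tm m ⊗ₖ Tm m) (a, b) (c, d)
      = (if i = b then Tm m a c * Tm m b d else 0)
        + (if j = a then Tm m a c * Tm m b d else 0) := by
    intro a b
    simp only [crossM, kroneckerMap_apply, add_mul, ite_mul, one_mul, zero_mul]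
  have hexp : ∀ x : Fin (m+1), (∑ y, if j = x then Tm m x c * Tm m y d else 0)
      = if j = x then Tm m x c * (∑ y, Tm m y d) else 0 := by
    intro x; split_ifs with h
    · rw [Finset.mul_sum]
    · simp
  rw [Fintype.sum_prod_type]
  rw [Finset.sum_congr rfl fun a _ => Finset.sum_congr rfl fun b _ => lhs a b]
  simp only [Finset.sum_add_distrib, Finset.sum_ite_eq, Finset.mem_univ, if_true]
  rw [Finset.sum_congr rfl fun x _ => hexp x,
    Finset.sum_ite_eq Finset.univ j, if_pos (Finset.mem_univ j),
    ← Finset.sum_mul, sum_Tm_col, sum_Tm_col]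
  by_cases hc : c = 0 <;> by_cases hd : d = 0
  · subst hc; subst hd
    have : ∀ r : I2 m, (Tm m ⊗ₖ Tm m) (i, j) r * Nm m r ((0 : Fin (m+1)), (0 : Fin (m+1)))
        = (Tm m ⊗ₖ Tm m) (i, j) r * (if r = ((0:Fin (m+1)),(0:Fin (m+1))) then (2*((m:ℝ)+1)) else 0) := by
      intro r; simp only [Nm, if_pos rfl]; split_ifs <;> ring
    rw [Finset.sum_congr rfl fun r _ => this r, sum_mul_ind]
    simp [Tm]; ring
  · subst hc
    have : ∀ r : I2 m, (Tm m ⊗ₖ Tm m) (i, j) r * Nm m r ((0 : Fin (m+1)), d)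
        = (Tm m ⊗ₖ Tm m) (i, j) r * (if r = (d, (0:Fin (m+1))) then (m+1:ℝ) else 0) := by
      intro r; simp only [Nm, if_pos rfl, if_neg hd]; split_ifs <;> ring
    rw [Finset.sum_congr rfl fun r _ => this r, sum_mul_ind]
    simp only [if_pos rfl, if_neg hd, kroneckerMap_apply]
    have : Tm m j 0 = 1 := by simp [Tm]
    rw [this]; simp; ring
  · subst hd
    have : ∀ r : I2 m, (Tm m ⊗ₖ Tm m) (i, j) r * Nm m r (c, (0 : Fin (m+1)))
        = (Tm m ⊗ₖ Tm m) (i, j) r * (if r = ((0:Fin (m+1)), c) then (m+1:ℝ) else 0) := by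
      intro r; simp only [Nm, if_pos rfl, if_neg hc]; split_ifs <;> ring
    rw [Finset.sum_congr rfl fun r _ => this r, sum_mul_ind]
    simp only [if_pos rfl, if_neg hc, kroneckerMap_apply]
    have : Tm m i 0 = 1 := by simp [Tm]
    rw [this]; simp [mul_comm]
  · have : ∀ r : I2 m, (Tm m ⊗ₖ Tm m) (i, j) r * Nm m r (c, d)
        = 0 := by
      intro r; simp [Nm, if_neg hc, if_neg hd]
    rw [Finset.sum_congr rfl fun r _ => this r]
    simp [if_neg hc, if_neg hd]

lemma Nm_mul_Cm : Nm m * Cm m = Cm m * Dm m := by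
  ext ⟨a, b⟩ ⟨c, d⟩
  rw [Matrix.mul_apply, Dm, Matrix.mul_diagonal]
  by_cases hc : c = 0 <;> by_cases hd : d = 0
  · subst hc; subst hd
    have : ∀ r : I2 m, Nm m (a, b) r * Cm m r ((0:Fin (m+1)), (0:Fin (m+1)))
        = Nm m (a, b) r * (if r = ((0:Fin (m+1)), (0:Fin (m+1))) then 1 else 0) := by
      intro r; simp only [Cm, if_pos rfl, eq_self_iff_true, if_true]
    rw [Finset.sum_congr rfl fun r _ => this r, sum_mul_ind, mul_one]
    simp only [Nm, Cm, dfun, if_pos rfl, eq_self_iff_true, if_true]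
    split_ifs <;> ring
  · subst hc
    have : ∀ r : I2 m, Nm m (a, b) r * Cm m r ((0:Fin (m+1)), d)
        = Nm m (a, b) r * (if r = ((0:Fin (m+1)), d) then 1 else 0)
          + Nm m (a, b) r * (if r = (d, (0:Fin (m+1))) then 1 else 0) := by
      intro r; simp only [Cm]; split_ifs <;> simp_all <;> ring
    rw [Finset.sum_congr rfl fun r _ => this r, Finset.sum_add_distrib,
      sum_mul_ind, sum_mul_ind, mul_one, mul_one]
    simp only [Nm, Cm, dfun, if_pos rfl, if_neg hd]
    split_ifs <;> simp_all [Prod.ext_iff] <;> ring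
  · subst hd
    have : ∀ r : I2 m, Nm m (a, b) r * Cm m r (c, (0:Fin (m+1)))
        = Nm m (a, b) r * (if r = ((0:Fin (m+1)), c) then 1 else 0)
          - Nm m (a, b) r * (if r = (c, (0:Fin (m+1))) then 1 else 0) := by
      intro r; simp only [Cm]; split_ifs <;> simp_all <;> ring
    rw [Finset.sum_congr rfl fun r _ => this r, Finset.sum_sub_distrib,
      sum_mul_ind, sum_mul_ind, mul_one, mul_one]
    simp only [Nm, Cm, dfun, if_pos rfl, if_neg hc]
    split_ifs <;> simp_all [Prod.ext_iff] <;> ring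
  · have : ∀ r : I2 m, Nm m (a, b) r * Cm m r (c, d)
        = Nm m (a, b) r * (if r = (c, d) then 1 else 0) := by
      intro r; simp only [Cm, if_neg hc, if_neg hd]
    rw [Finset.sum_congr rfl fun r _ => this r, sum_mul_ind, mul_one]
    simp only [Nm, Cm, dfun, if_neg hc, if_neg hd]
    split_ifs <;> ring

lemma map_dfun : (Finset.univ.val.map (dfun m)) =
    Multiset.replicate 1 (2*((m:ℝ)+1)) + Multiset.replicate m ((m:ℝ)+1) +
      Multiset.replicate m (-((m:ℝ)+1)) + Multiset.replicate (m^2) 0 := by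
  classical
  set s : Multiset (I2 m) := Finset.univ.val with hs
  have h1 := (Multiset.filter_add_not (fun p : I2 m => p.1 = 0) s).symm
  have h2 := (Multiset.filter_add_not (fun p : I2 m => p.2 = 0)
    (s.filter fun p : I2 m => p.1 = 0)).symm
  have h3 := (Multiset.filter_add_not (fun p : I2 m => p.2 = 0)
    (s.filter fun p : I2 m => ¬p.1 = 0)).symm
  rw [h2, h3] at h1
  simp only [Multiset.filter_filter] at h1
  have hmap : ∀ (P : I2 m → Prop) [DecidablePred P] (v : ℝ),
      (∀ p : I2 m, P p → dfun m p = v) →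
      (s.filter P).map (dfun m) = Multiset.replicate ((Finset.univ.filter P).card) v := by
    intro P _ v hv
    rw [Multiset.map_congr rfl fun x hx => hv x (Multiset.of_mem_filter hx),
      Multiset.map_const']
    congr 1
  have c1 : (Finset.univ.filter fun p : I2 m => p.2 = 0 ∧ p.1 = 0).card = 1 := by
    have : (Finset.univ.filter fun p : I2 m => p.2 = 0 ∧ p.1 = 0) = {(0, 0)} := by
      ext p; simp [Prod.ext_iff, eq_comm]; try tauto
    rw [this, Finset.card_singleton]
  have c2 : (Finset.univ.filter fun p : I2 m => ¬p.2 = 0 ∧ p.1 = 0).card = m := by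
    have : (Finset.univ.filter fun p : I2 m => ¬p.2 = 0 ∧ p.1 = 0)
        = {(0 : Fin (m+1))} ×ˢ (Finset.univ.erase 0) := by
      ext p; simp [Finset.mem_product, Prod.ext_iff, eq_comm]; try tauto
    rw [this, Finset.card_product, Finset.card_singleton,
      Finset.card_erase_of_mem (Finset.mem_univ _)]
    simp
  have c3 : (Finset.univ.filter fun p : I2 m => p.2 = 0 ∧ ¬p.1 = 0).card = m := by
    have : (Finset.univ.filter fun p : I2 m => p.2 = 0 ∧ ¬p.1 = 0)
        = (Finset.univ.erase 0) ×ˢ {(0 : Fin (m+1))} := by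
      ext p; simp [Finset.mem_product, Prod.ext_iff, eq_comm]; try tauto
    rw [this, Finset.card_product, Finset.card_singleton,
      Finset.card_erase_of_mem (Finset.mem_univ _)]
    simp
  have c4 : (Finset.univ.filter fun p : I2 m => ¬p.2 = 0 ∧ ¬p.1 = 0).card = m^2 := by
    have : (Finset.univ.filter fun p : I2 m => ¬p.2 = 0 ∧ ¬p.1 = 0)
        = (Finset.univ.erase 0) ×ˢ (Finset.univ.erase 0) := by
      ext p; simp [Finset.mem_product, Prod.ext_iff, eq_comm]; try tauto
    rw [this, Finset.card_product, Finset.card_erase_of_mem (Finset.mem_univ _)]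
    simp [sq]
  conv_lhs => rw [h1]
  rw [Multiset.map_add, Multiset.map_add, Multiset.map_add,
    hmap _ (2*((m:ℝ)+1)) (by intro p hp; simp [dfun, hp.1, hp.2]),
    hmap _ ((m:ℝ)+1) (by intro p hp; simp [dfun, hp.1, hp.2]),
    hmap _ (-((m:ℝ)+1)) (by intro p hp; simp [dfun, hp.1, hp.2]),
    hmap _ (0:ℝ) (by intro p hp; simp [dfun, hp.1, hp.2]),
    c1, c2, c3, c4]
  abel

end CrossAux2

open CrossAux CrossAux2 Kronecker in
/-- For `k ≥ 1`, the spectrum of `M` is the multiset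
`{2k (×1), k (×(k−1)), −k (×(k−1)), 0 (×(k−1)²)}`. -/
theorem crossM_spectrum (k : ℕ) (hk : 1 ≤ k) :
    eigMultiset (crossM k) =
      Multiset.replicate 1 (2 * (k : ℝ)) + Multiset.replicate (k - 1) (k : ℝ) +
        Multiset.replicate (k - 1) (-(k : ℝ)) +
        Multiset.replicate ((k - 1) ^ 2) (0 : ℝ) := by
  obtain ⟨m, rfl⟩ : ∃ m, k = m + 1 := ⟨k - 1, by omega⟩
  have hH : (crossM (m+1)).IsHermitian := by
    ext p q
    simp only [Matrix.conjTranspose_apply, crossM, star_trivial]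
    rw [add_comm]
    congr 1 <;> simp [eq_comm]
  have heq := eigMultiset_aux (crossM (m+1)) hH
  rw [eigMultiset, dif_pos hH, heq]
  have hTT : (Tm m ⊗ₖ Tm m) * (Tinv m ⊗ₖ Tinv m) = 1 := by
    rw [← Matrix.mul_kronecker_mul, Tm_mul_Tinv, Matrix.one_kronecker_one]
  have h1 := charpoly_conj_real (crossM (m+1)) (Nm m) (Tm m ⊗ₖ Tm m) (Tinv m ⊗ₖ Tinv m)
    hTT (crossM_mul_TT m)
  have hCC : Cm m * Cinv m = 1 := mul_eq_one_comm.mp (Cinv_mul_Cm m)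
  have h2 := charpoly_conj_real (Nm m) (Dm m) (Cm m) (Cinv m) hCC (Nm_mul_Cm m)
  rw [h1, h2, Dm, charpoly_diagonal_real]
  have hprod : (∏ i, (X - C (dfun m i)))
      = ((Finset.univ.val.map (dfun m)).map fun a => X - C a).prod := by
    rw [Multiset.map_map]; rfl
  rw [hprod, Polynomial.roots_multiset_prod_X_sub_C, map_dfun]
  have e1 : (m + 1 : ℕ) - 1 = m := by omega
  rw [e1]
  push_cast
  norm_num
end

section
/- Let G be a connected t-regular graph on k vertices and let ℓ ≥ 3. Then the bisection bandwidth of the generalized CLEX multigraph C(G,ℓ) is at most k^{ℓ+1}; that is, there exists X ⊆ [k]^ℓ with |X| = ⌊k^ℓ/2⌋ such that 𝟙_Xᵀ A 𝟙_{X^c} ≤ k^{ℓ+1}, where A is the adjacency matrix of C(G,ℓ). -/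
open scoped Classical

/-- The adjacency matrix of the generalized CLEX multigraph `C(G,ℓ)`, written
entrywise on tuples:  `A = A_G ⊗ I_{k^{ℓ−1}} + Σ_{j=0}^{ℓ−2} I_{k^j} ⊗ M ⊗ I_{k^{ℓ−2−j}}`,
where `M` is the CLEX cross-connection matrix
`M_{(i,j),(a,b)} = [i = b] + [j = a]`.  Under the canonical identification of
`[k]^ℓ` with the Kronecker-product index set, the first summand contributes
`A_G(u₀,w₀)` when all other coordinates agree, and the `j`-th term of the sum
contributes `M((u_j,u_{j+1}),(w_j,w_{j+1}))` when all coordinates other than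
`j, j+1` agree. -/
noncomputable def clexMat {k : ℕ} (AG : Matrix (Fin k) (Fin k) ℝ) (ℓ : ℕ) :
    Matrix (Fin ℓ → Fin k) (Fin ℓ → Fin k) ℝ :=
  fun u w =>
    (if h : 0 < ℓ then
      AG (u ⟨0, h⟩) (w ⟨0, h⟩) *
        (if ∀ m : Fin ℓ, 0 < (m : ℕ) → u m = w m then 1 else 0)
    else 0) +
    ∑ j : Fin ℓ,
      if h : (j : ℕ) + 1 < ℓ then
        (if ∀ m : Fin ℓ, (m : ℕ) < (j : ℕ) → u m = w m then 1 else 0) *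
          (((if u j = w ⟨(j : ℕ) + 1, h⟩ then 1 else 0) +
            (if u ⟨(j : ℕ) + 1, h⟩ = w j then 1 else 0) : ℝ)) *
          (if ∀ m : Fin ℓ, (j : ℕ) + 1 < (m : ℕ) → u m = w m then 1 else 0)
      else 0

namespace ClexAux



open Finset

variable {k ℓ : ℕ}

/-- value of a tuple as a base-`k` numeral, coordinate 0 least significant -/
def V (u : Fin ℓ → Fin k) : ℕ := ∑ m, (u m : ℕ) * k ^ (m : ℕ)

lemma V_eq_equiv (u : Fin ℓ → Fin k) : V u = ((finFunctionFinEquiv u : Fin (k ^ ℓ)) : ℕ) := by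
  rw [finFunctionFinEquiv_apply]; rfl

lemma V_inj : Function.Injective (V (k := k) (ℓ := ℓ)) := by
  intro u w h
  apply finFunctionFinEquiv.injective
  exact Fin.ext (by rw [← V_eq_equiv, ← V_eq_equiv, h])

lemma V_lt (u : Fin ℓ → Fin k) : V u < k ^ ℓ := by
  rw [V_eq_equiv]; exact (finFunctionFinEquiv u).isLt

lemma card_X (TT : ℕ) (hT : TT ≤ k ^ ℓ) :
    (univ.filter fun u : Fin ℓ → Fin k => V u < TT).card = TT := by
  have h1 : (univ.filter fun u : Fin ℓ → Fin k => V u < TT)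
      = (univ.filter fun x : Fin (k ^ ℓ) => (x : ℕ) < TT).image
          (finFunctionFinEquiv (m := k) (n := ℓ)).symm := by
    ext u
    simp only [mem_filter, mem_univ, true_and, mem_image]
    constructor
    · intro h
      exact ⟨finFunctionFinEquiv u, by rw [← V_eq_equiv]; exact h, Equiv.symm_apply_apply _ _⟩
    · rintro ⟨x, hx, rfl⟩
      rw [V_eq_equiv]
      simpa using hx
  rw [h1, Finset.card_image_of_injective _ (Equiv.injective _)]
  have h2 : (univ.filter fun x : Fin (k ^ ℓ) => (x : ℕ) < TT)
      = (Finset.range TT).attachFin (fun m hm => lt_of_lt_of_le (Finset.mem_range.mp hm) hT) := by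
    ext x
    simp [Finset.mem_attachFin]
  rw [h2, Finset.card_attachFin, Finset.card_range]

open Finset


def Lo (c : ℕ) (u : Fin ℓ → Fin k) : ℕ :=
  ∑ m ∈ univ.filter (fun m : Fin ℓ => (m : ℕ) < c), (u m : ℕ) * k ^ (m : ℕ)

def Hi (c : ℕ) (u : Fin ℓ → Fin k) : ℕ :=
  ∑ m ∈ univ.filter (fun m : Fin ℓ => ¬ (m : ℕ) < c), (u m : ℕ) * k ^ (m : ℕ)

lemma Lo_add_Hi (c : ℕ) (u : Fin ℓ → Fin k) : Lo c u + Hi c u = V u :=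
  Finset.sum_filter_add_sum_filter_not _ _ _

lemma Hi_dvd (c : ℕ) (u : Fin ℓ → Fin k) : k ^ c ∣ Hi c u := by
  refine Finset.dvd_sum fun m hm => ?_
  have : c ≤ (m : ℕ) := le_of_not_gt (Finset.mem_filter.mp hm).2
  exact Dvd.dvd.mul_left (pow_dvd_pow k this) _

lemma geom (hk : 1 ≤ k) (c : ℕ) : ∑ i ∈ Finset.range c, (k - 1) * k ^ i = k ^ c - 1 := by
  induction c with
  | zero => simp
  | succ n ih =>
    rw [Finset.sum_range_succ, ih]
    have h1 : 1 ≤ k ^ n := Nat.one_le_pow _ _ hk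
    have h2 : (k - 1) * k ^ n = k * k ^ n - k ^ n := by rw [Nat.sub_mul, one_mul]
    have h3 : k ^ (n + 1) = k * k ^ n := by ring
    have h4 : k ^ n ≤ k * k ^ n := Nat.le_mul_of_pos_left _ (by omega)
    omega

lemma Lo_lt (hk : 1 ≤ k) (c : ℕ) (u : Fin ℓ → Fin k) : Lo c u < k ^ c := by
  have h1 : Lo c u ≤ ∑ m ∈ univ.filter (fun m : Fin ℓ => (m : ℕ) < c), (k - 1) * k ^ (m : ℕ) := by
    refine Finset.sum_le_sum fun m _ => ?_
    exact Nat.mul_le_mul_right _ (Nat.le_pred_of_lt (u m).isLt)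
  have h2 : ∑ m ∈ univ.filter (fun m : Fin ℓ => (m : ℕ) < c), (k - 1) * k ^ (m : ℕ)
      = ∑ i ∈ (univ.filter (fun m : Fin ℓ => (m : ℕ) < c)).image (fun m : Fin ℓ => (m : ℕ)),
          (k - 1) * k ^ i := by
    rw [Finset.sum_image]
    intro a _ b _ hab
    exact Fin.val_injective hab
  have h3 : (univ.filter (fun m : Fin ℓ => (m : ℕ) < c)).image (fun m : Fin ℓ => (m : ℕ))
      ⊆ Finset.range c := by
    intro i hi
    simp only [Finset.mem_image, Finset.mem_filter] at hi
    obtain ⟨m, ⟨_, hm⟩, rfl⟩ := hi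
    exact Finset.mem_range.mpr hm
  have h4 : ∑ i ∈ (univ.filter (fun m : Fin ℓ => (m : ℕ) < c)).image (fun m : Fin ℓ => (m : ℕ)),
      (k - 1) * k ^ i ≤ k ^ c - 1 := by
    have := Finset.sum_le_sum_of_subset h3 (f := fun i => (k - 1) * k ^ i)
    simpa [geom hk] using this
  have h5 : 1 ≤ k ^ c := Nat.one_le_pow _ _ hk
  omega

lemma Hi_congr {c : ℕ} {x y : Fin ℓ → Fin k} (h : ∀ m : Fin ℓ, c ≤ (m : ℕ) → x m = y m) :
    Hi c x = Hi c y := by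
  refine Finset.sum_congr rfl fun m hm => ?_
  rw [h m (le_of_not_gt (Finset.mem_filter.mp hm).2)]

lemma Lo_congr {c : ℕ} {x y : Fin ℓ → Fin k} (h : ∀ m : Fin ℓ, (m : ℕ) < c → x m = y m) :
    Lo c x = Lo c y := by
  refine Finset.sum_congr rfl fun m hm => ?_
  rw [h m (Finset.mem_filter.mp hm).2]

lemma hi_window {c TT : ℕ} (hk : 1 ≤ k) {x y : Fin ℓ → Fin k} (hhi : Hi c x = Hi c y)
    (hx : V x < TT) (hy : TT ≤ V y) : Hi c x < TT ∧ TT ≤ Hi c x + k ^ c := by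
  constructor
  · calc Hi c x ≤ Lo c x + Hi c x := Nat.le_add_left _ _
    _ = V x := Lo_add_Hi c x
    _ < TT := hx
  · have h1 : V y = Lo c y + Hi c y := (Lo_add_Hi c y).symm
    have h2 := Lo_lt hk c y
    omega

lemma window_unique {N TT a b : ℕ} (hN : 0 < N) (ha : N ∣ a) (hb : N ∣ b)
    (ha1 : a < TT) (ha2 : TT ≤ a + N) (hb1 : b < TT) (hb2 : TT ≤ b + N) : a = b := by
  obtain ⟨p, rfl⟩ := ha
  obtain ⟨q, rfl⟩ := hb
  have h1 : N * p < N * (q + 1) := by rw [Nat.mul_succ]; omega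
  have h2 : N * q < N * (p + 1) := by rw [Nat.mul_succ]; omega
  have h3 := Nat.lt_of_mul_lt_mul_left h1
  have h4 := Nat.lt_of_mul_lt_mul_left h2
  have : p = q := by omega
  rw [this]

open Finset


def psi (jj jj1 : Fin ℓ) (z : Fin ℓ → Fin k) (m' : Fin k) : Fin ℓ → Fin k :=
  fun i => if i = jj then z jj1 else if i = jj1 then m' else z i

section psi
variable {jj jj1 : Fin ℓ}

def C (jj jj1 : Fin ℓ) (z : Fin ℓ → Fin k) : ℕ :=
  ∑ i ∈ (univ.erase jj1).erase jj, (z i : ℕ) * k ^ (i : ℕ)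

lemma psi_at_jj (z : Fin ℓ → Fin k) (m' : Fin k) : psi jj jj1 z m' jj = z jj1 := by simp [psi]

lemma psi_at_jj1 (hne : jj ≠ jj1) (z : Fin ℓ → Fin k) (m' : Fin k) : psi jj jj1 z m' jj1 = m' := by
  simp [psi, hne.symm]

lemma psi_at_other {i : Fin ℓ} (hi : i ≠ jj) (hi1 : i ≠ jj1) (z : Fin ℓ → Fin k) (m' : Fin k) :
    psi jj jj1 z m' i = z i := by simp [psi, hi, hi1]

lemma V_split (hne : jj ≠ jj1) (z : Fin ℓ → Fin k) :
    V z = C jj jj1 z + (z jj : ℕ) * k ^ (jj : ℕ) + (z jj1 : ℕ) * k ^ (jj1 : ℕ) := by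
  have h1 := Finset.sum_erase_add univ (fun i : Fin ℓ => (z i : ℕ) * k ^ (i : ℕ))
    (Finset.mem_univ jj1)
  have h2 := Finset.sum_erase_add (univ.erase jj1) (fun i : Fin ℓ => (z i : ℕ) * k ^ (i : ℕ))
    (Finset.mem_erase.mpr ⟨hne, Finset.mem_univ jj⟩)
  unfold V C
  rw [← h1, ← h2]

lemma C_psi (hne : jj ≠ jj1) (z : Fin ℓ → Fin k) (m' : Fin k) : C jj jj1 (psi jj jj1 z m') = C jj jj1 z := by
  refine Finset.sum_congr rfl fun i hi => ?_
  have h1 := Finset.mem_erase.mp hi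
  have h2 := Finset.mem_erase.mp h1.2
  rw [psi_at_other h1.1 h2.1]

lemma V_psi (hne : jj ≠ jj1) (z : Fin ℓ → Fin k) (m' : Fin k) :
    V (psi jj jj1 z m') = C jj jj1 z + (z jj1 : ℕ) * k ^ (jj : ℕ) + (m' : ℕ) * k ^ (jj1 : ℕ) := by
  rw [V_split hne, C_psi hne, psi_at_jj, psi_at_jj1 hne]

lemma psi_zero_le (hne : jj ≠ jj1) (hval : (jj1 : ℕ) = (jj : ℕ) + 1) (hk : 1 ≤ k)
    (z : Fin ℓ → Fin k) (m0 : Fin k) (hm0 : (m0 : ℕ) = 0) :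
    V (psi jj jj1 z m0) ≤ V z := by
  rw [V_psi hne, V_split hne z, hm0, zero_mul, add_zero, hval, pow_succ]
  have h1 : (z jj1 : ℕ) * k ^ (jj : ℕ) ≤ (z jj1 : ℕ) * (k ^ (jj : ℕ) * k) := by
    exact Nat.mul_le_mul_left _ (Nat.le_mul_of_pos_right _ (by omega))
  omega

lemma le_psi_last (hne : jj ≠ jj1) (hval : (jj1 : ℕ) = (jj : ℕ) + 1) (hk : 1 ≤ k)
    (z : Fin ℓ → Fin k) (mL : Fin k) (hmL : (mL : ℕ) = k - 1) :
    V z ≤ V (psi jj jj1 z mL) := by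
  rw [V_psi hne, V_split hne z, hmL, hval, pow_succ]
  obtain ⟨K, rfl⟩ : ∃ K, k = K + 1 := ⟨k - 1, by omega⟩
  set A := (K + 1) ^ (jj : ℕ) with hA
  set a := (z jj : ℕ) with ha
  set b := (z jj1 : ℕ) with hb
  have haK : a ≤ K := by have := (z jj).isLt; omega
  have hbK : b ≤ K := by have := (z jj1).isLt; omega
  have hsimp : K + 1 - 1 = K := by omega
  rw [hsimp]
  have t1 : b * (A * K) ≤ K * (A * K) := Nat.mul_le_mul_right _ hbK
  have t2 : a * A ≤ K * A := Nat.mul_le_mul_right _ haK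
  have goal : a * A + b * (A * (K + 1)) ≤ b * A + K * (A * (K + 1)) := by nlinarith [t1, t2]
  omega

end psi

section Mbound
variable {k ℓ : ℕ}

lemma Mbound (hk : 2 ≤ k) (TT : ℕ) (jj : Fin ℓ) (hj : (jj : ℕ) + 1 < ℓ)
    (X : Finset (Fin ℓ → Fin k)) (hX : ∀ u, u ∈ X ↔ V u < TT) :
    (∑ u ∈ X, ∑ w ∈ Xᶜ,
      ((if (∀ m : Fin ℓ, (m : ℕ) < (jj : ℕ) → u m = w m) then (1 : ℝ) else 0) *
        (((if u jj = w ⟨(jj : ℕ) + 1, hj⟩ then (1 : ℝ) else 0) +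
          (if u ⟨(jj : ℕ) + 1, hj⟩ = w jj then (1 : ℝ) else 0))) *
        (if (∀ m : Fin ℓ, (jj : ℕ) + 1 < (m : ℕ) → u m = w m) then (1 : ℝ) else 0)))
      ≤ (((k - 1) * k ^ ((jj : ℕ) + 2) : ℕ) : ℝ) := by
  set jj1 : Fin ℓ := ⟨(jj : ℕ) + 1, hj⟩ with hjj1
  have hval : (jj1 : ℕ) = (jj : ℕ) + 1 := rfl
  have hne : jj ≠ jj1 := by
    intro h
    have : (jj : ℕ) = (jj1 : ℕ) := by rw [h]
    omega
  have hk1 : 1 ≤ k := by omega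
  -- the two pair-properties
  set P1 : (Fin ℓ → Fin k) → (Fin ℓ → Fin k) → Prop :=
    fun u w => (∀ i : Fin ℓ, i ≠ jj → i ≠ jj1 → u i = w i) ∧ u jj = w jj1 with hP1
  set P2 : (Fin ℓ → Fin k) → (Fin ℓ → Fin k) → Prop :=
    fun u w => (∀ i : Fin ℓ, i ≠ jj → i ≠ jj1 → u i = w i) ∧ u jj1 = w jj with hP2
  -- pointwise bound
  have hpoint : ∀ u w : Fin ℓ → Fin k,
      ((if (∀ m : Fin ℓ, (m : ℕ) < (jj : ℕ) → u m = w m) then (1 : ℝ) else 0) *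
        (((if u jj = w jj1 then (1 : ℝ) else 0) +
          (if u jj1 = w jj then (1 : ℝ) else 0))) *
        (if (∀ m : Fin ℓ, (jj : ℕ) + 1 < (m : ℕ) → u m = w m) then (1 : ℝ) else 0))
      ≤ (if P1 u w then (1 : ℝ) else 0) + (if P2 u w then (1 : ℝ) else 0) := by
    intro u w
    by_cases hL : (∀ m : Fin ℓ, (m : ℕ) < (jj : ℕ) → u m = w m)
    · by_cases hH : (∀ m : Fin ℓ, (jj : ℕ) + 1 < (m : ℕ) → u m = w m)
      · have houter : ∀ i : Fin ℓ, i ≠ jj → i ≠ jj1 → u i = w i := by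
          intro i hi hi1
          have h1 : (i : ℕ) ≠ (jj : ℕ) := fun h => hi (Fin.ext h)
          have h2 : (i : ℕ) ≠ (jj : ℕ) + 1 := fun h => hi1 (Fin.ext h)
          rcases lt_or_gt_of_ne h1 with h | h
          · exact hL i h
          · exact hH i (by omega)
        rw [if_pos hL, if_pos hH, one_mul, mul_one]
        apply add_le_add
        · split_ifs with h1 h2
          · exact le_refl _
          · exact absurd ⟨houter, h1⟩ h2
          · norm_num
          · exact le_refl _
        · split_ifs with h1 h2
          · exact le_refl _
          · exact absurd ⟨houter, h1⟩ h2
          · norm_num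
          · exact le_refl _
      · rw [if_neg hH, mul_zero]
        positivity
    · rw [if_neg hL, zero_mul, zero_mul]
      positivity
  -- sum of pointwise bound
  have hsum1 : (∑ u ∈ X, ∑ w ∈ Xᶜ,
      ((if (∀ m : Fin ℓ, (m : ℕ) < (jj : ℕ) → u m = w m) then (1 : ℝ) else 0) *
        (((if u jj = w jj1 then (1 : ℝ) else 0) +
          (if u jj1 = w jj then (1 : ℝ) else 0))) *
        (if (∀ m : Fin ℓ, (jj : ℕ) + 1 < (m : ℕ) → u m = w m) then (1 : ℝ) else 0)))
      ≤ ∑ u ∈ X, ∑ w ∈ Xᶜ, ((if P1 u w then (1 : ℝ) else 0) + (if P2 u w then (1 : ℝ) else 0)) := by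
    refine Finset.sum_le_sum fun u _ => Finset.sum_le_sum fun w _ => hpoint u w
  -- convert to cardinalities
  set Q1 : Finset ((Fin ℓ → Fin k) × (Fin ℓ → Fin k)) :=
    (X ×ˢ Xᶜ).filter (fun p => P1 p.1 p.2) with hQ1
  set Q2 : Finset ((Fin ℓ → Fin k) × (Fin ℓ → Fin k)) :=
    (X ×ˢ Xᶜ).filter (fun p => P2 p.1 p.2) with hQ2
  have hsum2 : (∑ u ∈ X, ∑ w ∈ Xᶜ,
        ((if P1 u w then (1 : ℝ) else 0) + (if P2 u w then (1 : ℝ) else 0)))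
      = (Q1.card : ℝ) + (Q2.card : ℝ) := by
    rw [← Finset.sum_product']
    rw [Finset.sum_add_distrib]
    rw [Finset.sum_boole, Finset.sum_boole]
  -- recovery lemmas
  have hrecover1 : ∀ u w : Fin ℓ → Fin k, P1 u w → psi jj jj1 w (u jj1) = u := by
    intro u w hp
    funext i
    by_cases h1 : i = jj
    · subst h1; rw [psi_at_jj]; exact hp.2.symm
    · by_cases h2 : i = jj1
      · subst h2; rw [psi_at_jj1 hne]
      · rw [psi_at_other h1 h2]; exact (hp.1 i h1 h2).symm
  have hrecover2 : ∀ u w : Fin ℓ → Fin k, P2 u w → psi jj jj1 u (w jj1) = w := by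
    intro u w hp
    funext i
    by_cases h1 : i = jj
    · subst h1; rw [psi_at_jj]; exact hp.2
    · by_cases h2 : i = jj1
      · subst h2; rw [psi_at_jj1 hne]
      · rw [psi_at_other h1 h2]; exact hp.1 i h1 h2
  -- target sets
  set E1 : Finset ((Fin ℓ → Fin k) × Fin k) :=
    univ.filter (fun q => TT ≤ V q.1 ∧ V (psi jj jj1 q.1 q.2) < TT) with hE1
  set E2 : Finset ((Fin ℓ → Fin k) × Fin k) :=
    univ.filter (fun q => V q.1 < TT ∧ TT ≤ V (psi jj jj1 q.1 q.2)) with hE2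
  have hmemX : ∀ u : Fin ℓ → Fin k, u ∈ X → V u < TT := fun u hu => (hX u).mp hu
  have hmemXc : ∀ w : Fin ℓ → Fin k, w ∈ Xᶜ → TT ≤ V w := by
    intro w hw
    exact le_of_not_gt (fun hc => (Finset.mem_compl.mp hw) ((hX w).mpr hc))
  have hcard1 : Q1.card ≤ E1.card := by
    apply Finset.card_le_card_of_injOn (fun p => (p.2, p.1 jj1))
    · intro p hp
      simp only [hQ1, Finset.mem_coe, Finset.mem_filter, Finset.mem_product] at hp
      obtain ⟨⟨hu, hw⟩, hp1⟩ := hp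
      simp only [hE1, Finset.mem_coe, Finset.mem_filter, Finset.mem_univ, true_and]
      refine ⟨hmemXc _ hw, ?_⟩
      rw [hrecover1 p.1 p.2 hp1]
      exact hmemX _ hu
    · intro p hp p' hp' heq
      simp only [hQ1, Finset.coe_filter, Set.mem_setOf_eq, Finset.mem_product] at hp hp'
      have heq' : (p.2, p.1 jj1) = (p'.2, p'.1 jj1) := heq
      have h2 : p.2 = p'.2 := (Prod.ext_iff.mp heq').1
      have hb : p.1 jj1 = p'.1 jj1 := (Prod.ext_iff.mp heq').2
      have h1 : p.1 = p'.1 := by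
        rw [← hrecover1 p.1 p.2 hp.2, ← hrecover1 p'.1 p'.2 hp'.2, h2, hb]
      exact Prod.ext h1 h2
  have hcard2 : Q2.card ≤ E2.card := by
    apply Finset.card_le_card_of_injOn (fun p => (p.1, p.2 jj1))
    · intro p hp
      simp only [hQ2, Finset.mem_coe, Finset.mem_filter, Finset.mem_product] at hp
      obtain ⟨⟨hu, hw⟩, hp2⟩ := hp
      simp only [hE2, Finset.mem_coe, Finset.mem_filter, Finset.mem_univ, true_and]
      refine ⟨hmemX _ hu, ?_⟩
      rw [hrecover2 p.1 p.2 hp2]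
      exact hmemXc _ hw
    · intro p hp p' hp' heq
      simp only [hQ2, Finset.coe_filter, Set.mem_setOf_eq, Finset.mem_product] at hp hp'
      have heq' : (p.1, p.2 jj1) = (p'.1, p'.2 jj1) := heq
      have h1 : p.1 = p'.1 := (Prod.ext_iff.mp heq').1
      have hb : p.2 jj1 = p'.2 jj1 := (Prod.ext_iff.mp heq').2
      have h2 : p.2 = p'.2 := by
        rw [← hrecover2 p.1 p.2 hp.2, ← hrecover2 p'.1 p'.2 hp'.2, h1, hb]
      exact Prod.ext h1 h2
  -- now bound |E1| + |E2|
  set c2 := (jj : ℕ) + 2 with hc2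
  have hc2l : c2 ≤ ℓ := by omega
  have hkc2 : 0 < k ^ c2 := Nat.pow_pos (by omega)
  have hpsiHi : ∀ (z : Fin ℓ → Fin k) (m : Fin k),
      Hi c2 (psi jj jj1 z m) = Hi c2 z := by
    intro z m
    apply Hi_congr
    intro i hi
    apply psi_at_other
    · intro h
      rw [h] at hi
      simp only [hc2] at hi
      omega
    · intro h
      rw [h] at hi
      simp only [hc2, hval] at hi
      omega
  have hwin : ∀ q : (Fin ℓ → Fin k) × Fin k, q ∈ E1 ∪ E2 →
      Hi c2 q.1 < TT ∧ TT ≤ Hi c2 q.1 + k ^ c2 := by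
    intro q hq
    rcases Finset.mem_union.mp hq with h | h
    · have hh := (Finset.mem_filter.mp h).2
      have hw := hi_window (c := c2) hk1 (hpsiHi q.1 q.2) hh.2 hh.1
      rwa [hpsiHi q.1 q.2] at hw
    · have hh := (Finset.mem_filter.mp h).2
      exact hi_window (c := c2) hk1 (hpsiHi q.1 q.2).symm hh.1 hh.2
  have hinjcore : ∀ q q' : (Fin ℓ → Fin k) × Fin k, q ∈ E1 ∪ E2 → q' ∈ E1 ∪ E2 →
      (∀ i : Fin ℓ, (i : ℕ) < c2 → q.1 i = q'.1 i) → q.1 = q'.1 := by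
    intro q q' hq hq' hlow
    have h1 := hwin q hq
    have h2 := hwin q' hq'
    have hHi : Hi c2 q.1 = Hi c2 q'.1 :=
      window_unique hkc2 (Hi_dvd _ _) (Hi_dvd _ _) h1.1 h1.2 h2.1 h2.2
    have hLo : Lo c2 q.1 = Lo c2 q'.1 := Lo_congr hlow
    apply V_inj
    rw [← Lo_add_Hi c2, ← Lo_add_Hi c2, hHi, hLo]
  set φ : ((Fin ℓ → Fin k) × Fin k) → (Fin c2 → Fin k) :=
    fun q => fun i => q.1 (Fin.castLE hc2l i) with hφ
  have hφlow : ∀ q q' : (Fin ℓ → Fin k) × Fin k, φ q = φ q' →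
      (∀ i : Fin ℓ, (i : ℕ) < c2 → q.1 i = q'.1 i) := by
    intro q q' h i hi
    have hcast : Fin.castLE hc2l ⟨(i : ℕ), hi⟩ = i := Fin.ext rfl
    have := congrFun h ⟨(i : ℕ), hi⟩
    simp only [hφ] at this
    rwa [hcast] at this
  have hcarduniv : (Finset.univ : Finset (Fin c2 → Fin k)).card = k ^ c2 := by
    simp [Fintype.card_fun]
  -- general fiber bound
  have hfiber : ∀ m : Fin k, ((E1 ∪ E2).filter (fun q => q.2 = m)).card ≤ k ^ c2 := by
    intro m
    rw [← hcarduniv]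
    apply Finset.card_le_card_of_injOn φ (fun _ _ => Finset.mem_univ _)
    intro q hq q' hq' heq
    simp only [Finset.coe_filter, Set.mem_setOf_eq] at hq hq'
    have h1 : q.1 = q'.1 := hinjcore q q' hq.1 hq'.1 (hφlow q q' heq)
    have h2 : q.2 = q'.2 := by rw [hq.2, hq'.2]
    exact Prod.ext h1 h2
  -- special fibers
  set m0 : Fin k := ⟨0, by omega⟩ with hm0
  set mL : Fin k := ⟨k - 1, by omega⟩ with hmL
  have hm0L : m0 ≠ mL := by
    intro h
    have : (m0 : ℕ) = (mL : ℕ) := by rw [h]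
    simp only [hm0, hmL] at this
    omega
  have hfib0mem : ∀ q : (Fin ℓ → Fin k) × Fin k,
      q ∈ (E1 ∪ E2).filter (fun q => q.2 = m0) → TT ≤ V q.1 := by
    intro q hq
    obtain ⟨hqE, hq2⟩ := Finset.mem_filter.mp hq
    rcases Finset.mem_union.mp hqE with h | h
    · exact ((Finset.mem_filter.mp h).2).1
    · exfalso
      have hh := (Finset.mem_filter.mp h).2
      have hle : V (psi jj jj1 q.1 q.2) ≤ V q.1 := by
        rw [hq2]
        exact psi_zero_le hne hval hk1 q.1 m0 rfl
      omega
  have hfibLmem : ∀ q : (Fin ℓ → Fin k) × Fin k,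
      q ∈ (E1 ∪ E2).filter (fun q => q.2 = mL) → V q.1 < TT := by
    intro q hq
    obtain ⟨hqE, hq2⟩ := Finset.mem_filter.mp hq
    rcases Finset.mem_union.mp hqE with h | h
    · exfalso
      have hh := (Finset.mem_filter.mp h).2
      have hle : V q.1 ≤ V (psi jj jj1 q.1 q.2) := by
        rw [hq2]
        exact le_psi_last hne hval hk1 q.1 mL rfl
      omega
    · exact ((Finset.mem_filter.mp h).2).1
  have hfib0L : ((E1 ∪ E2).filter (fun q => q.2 = m0)).card
      + ((E1 ∪ E2).filter (fun q => q.2 = mL)).card ≤ k ^ c2 := by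
    rw [← Finset.card_union_of_disjoint]
    · rw [← hcarduniv]
      apply Finset.card_le_card_of_injOn φ (fun _ _ => Finset.mem_univ _)
      intro q hq q' hq' heq
      rw [Finset.mem_coe, Finset.mem_union] at hq hq'
      have hqE : q ∈ E1 ∪ E2 := by
        rcases hq with h | h
        · exact (Finset.mem_filter.mp h).1
        · exact (Finset.mem_filter.mp h).1
      have hq'E : q' ∈ E1 ∪ E2 := by
        rcases hq' with h | h
        · exact (Finset.mem_filter.mp h).1
        · exact (Finset.mem_filter.mp h).1
      have h1 : q.1 = q'.1 := hinjcore q q' hqE hq'E (hφlow q q' heq)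
      -- rule out mixed membership
      have h2 : q.2 = q'.2 := by
        rcases hq with h | h <;> rcases hq' with h' | h'
        · rw [(Finset.mem_filter.mp h).2, (Finset.mem_filter.mp h').2]
        · exfalso
          have a1 := hfib0mem q h
          have a2 := hfibLmem q' h'
          rw [h1] at a1
          omega
        · exfalso
          have a1 := hfibLmem q h
          have a2 := hfib0mem q' h'
          rw [← h1] at a2
          omega
        · rw [(Finset.mem_filter.mp h).2, (Finset.mem_filter.mp h').2]
      exact Prod.ext h1 h2
    · apply Finset.disjoint_left.mpr
      intro q hq hq'
      have a1 := (Finset.mem_filter.mp hq).2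
      have a2 := (Finset.mem_filter.mp hq').2
      exact hm0L (a1 ▸ a2 ▸ rfl)
  have hdisjE : Disjoint E1 E2 := by
    apply Finset.disjoint_left.mpr
    intro q hq hq'
    have a1 := (Finset.mem_filter.mp hq).2
    have a2 := (Finset.mem_filter.mp hq').2
    omega
  have hEcard : E1.card + E2.card = (E1 ∪ E2).card :=
    (Finset.card_union_of_disjoint hdisjE).symm
  have hfibsum : (E1 ∪ E2).card
      = ∑ m : Fin k, ((E1 ∪ E2).filter (fun q => q.2 = m)).card :=
    Finset.card_eq_sum_card_fiberwise (fun q _ => Finset.mem_univ q.2)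
  have hLmem : mL ∈ univ.erase m0 := Finset.mem_erase.mpr ⟨hm0L.symm, Finset.mem_univ mL⟩
  have hcarderase : ((univ.erase m0).erase mL).card = k - 2 := by
    rw [Finset.card_erase_of_mem hLmem, Finset.card_erase_of_mem (Finset.mem_univ m0),
      Finset.card_univ, Fintype.card_fin]
    omega
  have hrest : ∑ m ∈ (univ.erase m0).erase mL, ((E1 ∪ E2).filter (fun q => q.2 = m)).card
      ≤ (k - 2) * k ^ c2 := by
    calc ∑ m ∈ (univ.erase m0).erase mL, ((E1 ∪ E2).filter (fun q => q.2 = m)).card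
        ≤ ((univ.erase m0).erase mL).card • (k ^ c2) :=
          Finset.sum_le_card_nsmul _ _ _ (fun m _ => hfiber m)
      _ = (k - 2) * k ^ c2 := by rw [smul_eq_mul, hcarderase]
  have h0 : ((E1 ∪ E2).filter (fun q => q.2 = m0)).card
      + ∑ m ∈ univ.erase m0, ((E1 ∪ E2).filter (fun q => q.2 = m)).card
      = ∑ m : Fin k, ((E1 ∪ E2).filter (fun q => q.2 = m)).card :=
    Finset.add_sum_erase univ
      (fun m : Fin k => ((E1 ∪ E2).filter (fun q => q.2 = m)).card) (Finset.mem_univ m0)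
  have h1 : ((E1 ∪ E2).filter (fun q => q.2 = mL)).card
      + ∑ m ∈ (univ.erase m0).erase mL, ((E1 ∪ E2).filter (fun q => q.2 = m)).card
      = ∑ m ∈ univ.erase m0, ((E1 ∪ E2).filter (fun q => q.2 = m)).card :=
    Finset.add_sum_erase (univ.erase m0)
      (fun m : Fin k => ((E1 ∪ E2).filter (fun q => q.2 = m)).card) hLmem
  have hK : k ^ c2 + (k - 2) * k ^ c2 = (k - 1) * k ^ c2 := by
    have hkk : k - 2 + 1 = k - 1 := by omega
    calc k ^ c2 + (k - 2) * k ^ c2 = (k - 2 + 1) * k ^ c2 := by ring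
      _ = (k - 1) * k ^ c2 := by rw [hkk]
  have hsumfib : ∑ m : Fin k, ((E1 ∪ E2).filter (fun q => q.2 = m)).card
      ≤ (k - 1) * k ^ c2 := by omega
  have hfinal : Q1.card + Q2.card ≤ (k - 1) * k ^ c2 := by
    calc Q1.card + Q2.card ≤ E1.card + E2.card := add_le_add hcard1 hcard2
      _ = (E1 ∪ E2).card := hEcard
      _ = ∑ m : Fin k, ((E1 ∪ E2).filter (fun q => q.2 = m)).card := hfibsum
      _ ≤ (k - 1) * k ^ c2 := hsumfib
  calc (∑ u ∈ X, ∑ w ∈ Xᶜ,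
      ((if (∀ m : Fin ℓ, (m : ℕ) < (jj : ℕ) → u m = w m) then (1 : ℝ) else 0) *
        (((if u jj = w jj1 then (1 : ℝ) else 0) +
          (if u jj1 = w jj then (1 : ℝ) else 0))) *
        (if (∀ m : Fin ℓ, (jj : ℕ) + 1 < (m : ℕ) → u m = w m) then (1 : ℝ) else 0)))
      ≤ ∑ u ∈ X, ∑ w ∈ Xᶜ, ((if P1 u w then (1 : ℝ) else 0) + (if P2 u w then (1 : ℝ) else 0)) :=
        hsum1
    _ = (Q1.card : ℝ) + (Q2.card : ℝ) := hsum2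
    _ ≤ (((k - 1) * k ^ ((jj : ℕ) + 2) : ℕ) : ℝ) := by
        rw [← Nat.cast_add]
        exact_mod_cast hfinal

end Mbound

section Gbound
variable {k ℓ : ℕ}

lemma Gbound (hk : 1 ≤ k) (hl : 0 < ℓ) (TT : ℕ) (G : SimpleGraph (Fin k))
    (X : Finset (Fin ℓ → Fin k)) (hX : ∀ u, u ∈ X ↔ V u < TT) :
    (∑ u ∈ X, ∑ w ∈ Xᶜ,
      (G.adjMatrix ℝ (u ⟨0, hl⟩) (w ⟨0, hl⟩) *
        (if (∀ m : Fin ℓ, 0 < (m : ℕ) → u m = w m) then (1 : ℝ) else 0)))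
      ≤ ((k ^ 2 : ℕ) : ℝ) := by
  set z0 : Fin ℓ := ⟨0, hl⟩ with hz0
  set PG : (Fin ℓ → Fin k) → (Fin ℓ → Fin k) → Prop :=
    fun u w => ∀ m : Fin ℓ, 0 < (m : ℕ) → u m = w m with hPG
  have hpoint : ∀ u w : Fin ℓ → Fin k,
      (G.adjMatrix ℝ (u z0) (w z0) *
        (if (∀ m : Fin ℓ, 0 < (m : ℕ) → u m = w m) then (1 : ℝ) else 0))
      ≤ (if PG u w then (1 : ℝ) else 0) := by
    intro u w
    by_cases h : ∀ m : Fin ℓ, 0 < (m : ℕ) → u m = w m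
    · rw [if_pos h, mul_one, SimpleGraph.adjMatrix_apply]
      split_ifs <;> norm_num
    · rw [if_neg h, mul_zero]
  have hsum1 : (∑ u ∈ X, ∑ w ∈ Xᶜ,
      (G.adjMatrix ℝ (u z0) (w z0) *
        (if (∀ m : Fin ℓ, 0 < (m : ℕ) → u m = w m) then (1 : ℝ) else 0)))
      ≤ ∑ u ∈ X, ∑ w ∈ Xᶜ, (if PG u w then (1 : ℝ) else 0) :=
    Finset.sum_le_sum fun u _ => Finset.sum_le_sum fun w _ => hpoint u w
  set Q : Finset ((Fin ℓ → Fin k) × (Fin ℓ → Fin k)) :=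
    (X ×ˢ Xᶜ).filter (fun p => PG p.1 p.2) with hQ
  have hsum2 : (∑ u ∈ X, ∑ w ∈ Xᶜ, (if PG u w then (1 : ℝ) else 0)) = (Q.card : ℝ) := by
    rw [← Finset.sum_product', Finset.sum_boole]
  have hmemX : ∀ u : Fin ℓ → Fin k, u ∈ X → V u < TT := fun u hu => (hX u).mp hu
  have hmemXc : ∀ w : Fin ℓ → Fin k, w ∈ Xᶜ → TT ≤ V w := by
    intro w hw
    exact le_of_not_gt (fun hc => (Finset.mem_compl.mp hw) ((hX w).mpr hc))
  have hwin : ∀ p : (Fin ℓ → Fin k) × (Fin ℓ → Fin k), p ∈ Q →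
      (Hi 1 p.1 < TT ∧ TT ≤ Hi 1 p.1 + k ^ 1) ∧ Hi 1 p.1 = Hi 1 p.2 := by
    intro p hp
    obtain ⟨hmem, hpg⟩ := Finset.mem_filter.mp hp
    obtain ⟨hu, hw⟩ := Finset.mem_product.mp hmem
    have hHi : Hi 1 p.1 = Hi 1 p.2 := Hi_congr (fun m hm => hpg m (by omega))
    exact ⟨hi_window hk hHi (hmemX _ hu) (hmemXc _ hw), hHi⟩
  have hcard : Q.card ≤ (Finset.univ : Finset (Fin k × Fin k)).card := by
    apply Finset.card_le_card_of_injOn (fun p => (p.1 z0, p.2 z0)) (fun _ _ => Finset.mem_univ _)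
    intro p hp p' hp' heq
    have hp0 := hwin p (Finset.mem_coe.mp hp)
    have hp0' := hwin p' (Finset.mem_coe.mp hp')
    have heq' : (p.1 z0, p.2 z0) = (p'.1 z0, p'.2 z0) := heq
    have e1 : p.1 z0 = p'.1 z0 := (Prod.ext_iff.mp heq').1
    have e2 : p.2 z0 = p'.2 z0 := (Prod.ext_iff.mp heq').2
    have hHiu : Hi 1 p.1 = Hi 1 p'.1 :=
      window_unique (Nat.pow_pos (by omega)) (Hi_dvd _ _) (Hi_dvd _ _)
        hp0.1.1 hp0.1.2 hp0'.1.1 hp0'.1.2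
    have hlow : ∀ x x' : Fin ℓ → Fin k, x z0 = x' z0 →
        (∀ m : Fin ℓ, (m : ℕ) < 1 → x m = x' m) := by
      intro x x' hx m hm
      have hmv : (m : ℕ) = 0 := by omega
      have : m = z0 := Fin.ext (by rw [hmv])
      rw [this]
      exact hx
    have hu : p.1 = p'.1 := by
      apply V_inj
      rw [← Lo_add_Hi 1, ← Lo_add_Hi 1, hHiu, Lo_congr (hlow p.1 p'.1 e1)]
    have hw : p.2 = p'.2 := by
      apply V_inj
      rw [← Lo_add_Hi 1, ← Lo_add_Hi 1, Lo_congr (hlow p.2 p'.2 e2), hp0.2.symm, hHiu, hp0'.2]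
    exact Prod.ext hu hw
  have hcarduniv : (Finset.univ : Finset (Fin k × Fin k)).card = k ^ 2 := by
    simp [Finset.card_univ, sq]
  calc (∑ u ∈ X, ∑ w ∈ Xᶜ,
      (G.adjMatrix ℝ (u z0) (w z0) *
        (if (∀ m : Fin ℓ, 0 < (m : ℕ) → u m = w m) then (1 : ℝ) else 0)))
      ≤ ∑ u ∈ X, ∑ w ∈ Xᶜ, (if PG u w then (1 : ℝ) else 0) := hsum1
    _ = (Q.card : ℝ) := hsum2
    _ ≤ ((k ^ 2 : ℕ) : ℝ) := by
        rw [← hcarduniv]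
        exact_mod_cast hcard

end Gbound

end ClexAux

open Finset in
/-- Let `G` be a connected `t`-regular graph on `k` vertices and `ℓ ≥ 3`.  Then the
bisection bandwidth of the generalized CLEX multigraph `C(G,ℓ)` is at most `k^{ℓ+1}`:
there is a set `X` of `⌊k^ℓ/2⌋` vertices with `𝟙_Xᵀ A 𝟙_{Xᶜ} ≤ k^{ℓ+1}`. -/
theorem clex_bisection_bound {k t ℓ : ℕ} (G : SimpleGraph (Fin k))
    (hG : G.Connected) (hreg : G.IsRegularOfDegree t) (hl : 3 ≤ ℓ) :
    ∃ X : Finset (Fin ℓ → Fin k), X.card = k ^ ℓ / 2 ∧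
      ∑ u ∈ X, ∑ w ∈ Xᶜ, clexMat (G.adjMatrix ℝ) ℓ u w ≤ (k : ℝ) ^ (ℓ + 1) := by
  have hl0 : 0 < ℓ := by omega
  by_cases hk2 : k < 2
  · -- trivial cases k = 0, 1
    refine ⟨∅, ?_, ?_⟩
    · have h1 : k ^ ℓ ≤ 1 := by
        interval_cases k
        · rw [Nat.zero_pow (by omega)]; omega
        · rw [one_pow]
      rw [Finset.card_empty]
      omega
    · rw [Finset.sum_empty]
      positivity
  · push_neg at hk2
    set TT := k ^ ℓ / 2 with hTT
    set X : Finset (Fin ℓ → Fin k) :=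
      univ.filter (fun u : Fin ℓ → Fin k => ClexAux.V u < TT) with hXdef
    have hX : ∀ u : Fin ℓ → Fin k, u ∈ X ↔ ClexAux.V u < TT := by
      intro u
      rw [hXdef]
      simp
    refine ⟨X, ?_, ?_⟩
    · exact ClexAux.card_X TT (Nat.div_le_self _ _)
    · -- notation for the two pieces
      set A : (Fin ℓ → Fin k) → (Fin ℓ → Fin k) → ℝ := fun u w =>
        G.adjMatrix ℝ (u ⟨0, hl0⟩) (w ⟨0, hl0⟩) *
          (if ∀ m : Fin ℓ, 0 < (m : ℕ) → u m = w m then (1 : ℝ) else 0) with hA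
      set B : Fin ℓ → (Fin ℓ → Fin k) → (Fin ℓ → Fin k) → ℝ := fun j u w =>
        if h : (j : ℕ) + 1 < ℓ then
          (if ∀ m : Fin ℓ, (m : ℕ) < (j : ℕ) → u m = w m then (1 : ℝ) else 0) *
            (((if u j = w ⟨(j : ℕ) + 1, h⟩ then (1 : ℝ) else 0) +
              (if u ⟨(j : ℕ) + 1, h⟩ = w j then (1 : ℝ) else 0))) *
            (if ∀ m : Fin ℓ, (j : ℕ) + 1 < (m : ℕ) → u m = w m then (1 : ℝ) else 0)
        else 0 with hB
      have hclex : ∀ u w : Fin ℓ → Fin k,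
          clexMat (G.adjMatrix ℝ) ℓ u w = A u w + ∑ j : Fin ℓ, B j u w := by
        intro u w
        rw [hA, hB]
        unfold clexMat
        rw [dif_pos hl0]
      -- split the sum
      have hsplit : (∑ u ∈ X, ∑ w ∈ Xᶜ, clexMat (G.adjMatrix ℝ) ℓ u w)
          = (∑ u ∈ X, ∑ w ∈ Xᶜ, A u w)
            + ∑ j : Fin ℓ, (∑ u ∈ X, ∑ w ∈ Xᶜ, B j u w) := by
        calc (∑ u ∈ X, ∑ w ∈ Xᶜ, clexMat (G.adjMatrix ℝ) ℓ u w)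
            = ∑ u ∈ X, ∑ w ∈ Xᶜ, (A u w + ∑ j : Fin ℓ, B j u w) :=
              Finset.sum_congr rfl fun u _ => Finset.sum_congr rfl fun w _ => hclex u w
          _ = ∑ u ∈ X, ((∑ w ∈ Xᶜ, A u w) + ∑ w ∈ Xᶜ, ∑ j : Fin ℓ, B j u w) :=
              Finset.sum_congr rfl fun u _ => Finset.sum_add_distrib
          _ = (∑ u ∈ X, ∑ w ∈ Xᶜ, A u w) + ∑ u ∈ X, ∑ w ∈ Xᶜ, ∑ j : Fin ℓ, B j u w :=
              Finset.sum_add_distrib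
          _ = (∑ u ∈ X, ∑ w ∈ Xᶜ, A u w) + ∑ u ∈ X, ∑ j : Fin ℓ, ∑ w ∈ Xᶜ, B j u w := by
              rw [Finset.sum_congr rfl fun u (_ : u ∈ X) => Finset.sum_comm (s := Xᶜ)
                (t := univ) (f := fun w j => B j u w)]
          _ = (∑ u ∈ X, ∑ w ∈ Xᶜ, A u w) + ∑ j : Fin ℓ, ∑ u ∈ X, ∑ w ∈ Xᶜ, B j u w := by
              rw [Finset.sum_comm (s := X) (t := univ)
                (f := fun u j => ∑ w ∈ Xᶜ, B j u w)]
      -- bound the M part termwise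
      have hMj : ∀ j : Fin ℓ, (∑ u ∈ X, ∑ w ∈ Xᶜ, B j u w)
          ≤ (if (j : ℕ) + 1 < ℓ then (((k - 1) * k ^ ((j : ℕ) + 2) : ℕ) : ℝ) else 0) := by
        intro j
        by_cases hj : (j : ℕ) + 1 < ℓ
        · rw [if_pos hj]
          have hBj : ∀ u w : Fin ℓ → Fin k, B j u w =
              (if ∀ m : Fin ℓ, (m : ℕ) < (j : ℕ) → u m = w m then (1 : ℝ) else 0) *
                (((if u j = w ⟨(j : ℕ) + 1, hj⟩ then (1 : ℝ) else 0) +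
                  (if u ⟨(j : ℕ) + 1, hj⟩ = w j then (1 : ℝ) else 0))) *
                (if ∀ m : Fin ℓ, (j : ℕ) + 1 < (m : ℕ) → u m = w m then (1 : ℝ) else 0) := by
            intro u w
            rw [hB]
            exact dif_pos hj
          calc (∑ u ∈ X, ∑ w ∈ Xᶜ, B j u w)
              = ∑ u ∈ X, ∑ w ∈ Xᶜ,
                ((if ∀ m : Fin ℓ, (m : ℕ) < (j : ℕ) → u m = w m then (1 : ℝ) else 0) *
                  (((if u j = w ⟨(j : ℕ) + 1, hj⟩ then (1 : ℝ) else 0) +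
                    (if u ⟨(j : ℕ) + 1, hj⟩ = w j then (1 : ℝ) else 0))) *
                  (if ∀ m : Fin ℓ, (j : ℕ) + 1 < (m : ℕ) → u m = w m then (1 : ℝ) else 0)) :=
                Finset.sum_congr rfl fun u _ => Finset.sum_congr rfl fun w _ => hBj u w
            _ ≤ (((k - 1) * k ^ ((j : ℕ) + 2) : ℕ) : ℝ) :=
                ClexAux.Mbound hk2 TT j hj X hX
        · rw [if_neg hj]
          have hBj : ∀ u w : Fin ℓ → Fin k, B j u w = 0 := by
            intro u w
            rw [hB]
            exact dif_neg hj
          calc (∑ u ∈ X, ∑ w ∈ Xᶜ, B j u w)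
              = ∑ u ∈ X, ∑ w ∈ Xᶜ, (0 : ℝ) :=
                Finset.sum_congr rfl fun u _ => Finset.sum_congr rfl fun w _ => hBj u w
            _ = 0 := by simp
            _ ≤ 0 := le_refl _
      -- numeric bound
      set S : ℕ := ∑ i ∈ Finset.range ℓ, (if i + 1 < ℓ then (k - 1) * k ^ (i + 2) else 0)
        with hS
      have hMsum : (∑ j : Fin ℓ, (if (j : ℕ) + 1 < ℓ
          then (((k - 1) * k ^ ((j : ℕ) + 2) : ℕ) : ℝ) else 0)) = (S : ℝ) := by
        rw [hS]
        rw [Fin.sum_univ_eq_sum_range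
          (fun i => if i + 1 < ℓ then (((k - 1) * k ^ (i + 2) : ℕ) : ℝ) else 0) ℓ]
        rw [Nat.cast_sum]
        refine Finset.sum_congr rfl fun i _ => ?_
        split_ifs <;> simp
      have hnum : k ^ 2 + S ≤ k ^ (ℓ + 1) := by
        obtain ⟨L, rfl⟩ : ∃ L, ℓ = L + 1 := ⟨ℓ - 1, by omega⟩
        have hS2 : S = ∑ i ∈ Finset.range L, (k - 1) * k ^ (i + 2) := by
          rw [hS, Finset.sum_range_succ, if_neg (by omega), add_zero]
          refine Finset.sum_congr rfl fun i hi => ?_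
          rw [if_pos (by have := Finset.mem_range.mp hi; omega)]
        have hS3 : S = k ^ 2 * ((k ^ L) - 1) := by
          rw [hS2]
          have : ∀ i ∈ Finset.range L, (k - 1) * k ^ (i + 2) = k ^ 2 * ((k - 1) * k ^ i) := by
            intro i _
            ring
          rw [Finset.sum_congr rfl this, ← Finset.mul_sum, ClexAux.geom (by omega) L]
        have hb1 : 1 ≤ k ^ L := Nat.one_le_pow _ _ (by omega)
        obtain ⟨b', hb'⟩ : ∃ b', k ^ L = b' + 1 := ⟨k ^ L - 1, by omega⟩
        have e2 : k ^ 2 * ((k ^ L) - 1) + k ^ 2 = k ^ 2 * k ^ L := by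
          rw [hb']
          simp [Nat.mul_succ]
        have e3 : k ^ (L + 1 + 1) = k ^ 2 * k ^ L := by
          rw [← pow_add]
          ring_nf
        omega
      -- final assembly
      rw [hsplit]
      have hG2 := ClexAux.Gbound (by omega) hl0 TT G X hX
      have hstep : (∑ u ∈ X, ∑ w ∈ Xᶜ, A u w)
          + (∑ j : Fin ℓ, ∑ u ∈ X, ∑ w ∈ Xᶜ, B j u w)
          ≤ ((k ^ 2 : ℕ) : ℝ) + (S : ℝ) := by
        refine add_le_add ?_ ?_
        · exact hG2
        · calc (∑ j : Fin ℓ, ∑ u ∈ X, ∑ w ∈ Xᶜ, B j u w)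
              ≤ ∑ j : Fin ℓ, (if (j : ℕ) + 1 < ℓ
                  then (((k - 1) * k ^ ((j : ℕ) + 2) : ℕ) : ℝ) else 0) :=
                Finset.sum_le_sum fun j _ => hMj j
            _ = (S : ℝ) := hMsum
      refine le_trans hstep ?_
      have : ((k ^ 2 : ℕ) : ℝ) + (S : ℝ) = ((k ^ 2 + S : ℕ) : ℝ) := by push_cast; ring
      rw [this]
      calc ((k ^ 2 + S : ℕ) : ℝ) ≤ ((k ^ (ℓ + 1) : ℕ) : ℝ) := Nat.cast_le.mpr hnum
        _ = (k : ℝ) ^ (ℓ + 1) := by push_cast; ring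
end

section
/- Let G be a connected d-regular graph, H a connected r-regular graph on t·d vertices, and let 𝒢 = G ⇝_k H be any k-fold G-connected-H graph. If λ₂ denotes the second-largest adjacency eigenvalue of G, then the algebraic connectivity of 𝒢 satisfies ρ₂(𝒢) ≤ k − k·λ₂/d. -/
open scoped Classical

/-- sorted comparison of entries -/
lemma sorted_getElem_le {l : List ℝ} (hs : l.Pairwise (· ≤ ·)) {i j : ℕ}
    (hij : i ≤ j) (hj : j < l.length) : l[i]'(lt_of_le_of_lt hij hj) ≤ l[j] := by
  rcases eq_or_lt_of_le hij with h | h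
  · subst h; exact le_refl _
  · exact hs.rel_get_of_lt (a := ⟨i, lt_of_le_of_lt hij hj⟩) (b := ⟨j, hj⟩) h

lemma sorted_getD_le_of_countP {l : List ℝ} (hs : l.Pairwise (· ≤ ·)) {k : ℕ} {x : ℝ}
    (h : k + 1 ≤ l.countP (fun a => decide (a ≤ x))) : l.getD k 0 ≤ x := by
  have hlen : k < l.length := lt_of_lt_of_le (Nat.lt_of_lt_of_le (Nat.lt_succ_self k) h)
    List.countP_le_length
  rw [l.getD_eq_getElem 0 hlen]
  by_contra hc
  push_neg at hc
  have hsplit : l.countP (fun a => decide (a ≤ x)) =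
      (l.take k).countP (fun a => decide (a ≤ x)) +
      (l.drop k).countP (fun a => decide (a ≤ x)) := by
    conv_lhs => rw [← List.take_append_drop k l]
    rw [List.countP_append]
  have h1 : (l.take k).countP (fun a => decide (a ≤ x)) ≤ k := by
    refine le_trans List.countP_le_length ?_
    simp [List.length_take]
  have h2 : (l.drop k).countP (fun a => decide (a ≤ x)) = 0 := by
    rw [List.countP_eq_zero]
    intro a ha
    obtain ⟨m, hm, rfl⟩ := List.getElem_of_mem ha
    have hkm : k + m < l.length := by
      have := hm; simp only [List.length_drop] at this; omega
    rw [List.getElem_drop (h := hm)]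
    have : l[k] ≤ l[k + m] := sorted_getElem_le hs (Nat.le_add_right _ _) hkm
    simp only [decide_eq_true_eq]
    linarith
  omega

lemma two_le_count_of_two_getElem {l : List ℝ} {i j : ℕ} (hij : i < j) (hj : j < l.length)
    {a : ℝ} (hi : l[i]'(lt_trans hij hj) = a) (hj' : l[j] = a) : 2 ≤ l.count a := by
  have h1 : a ∈ l.take j := by
    have hi' : i < (l.take j).length := by simp [List.length_take]; omega
    have : (l.take j)[i] = a := by rw [List.getElem_take]; exact hi
    exact this ▸ List.getElem_mem _
  have h2 : a ∈ l.drop j := by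
    have hj2 : 0 < (l.drop j).length := by simp [List.length_drop]; omega
    have : (l.drop j)[0] = a := by rw [List.getElem_drop]; simpa using hj'
    exact this ▸ List.getElem_mem _
  have := List.count_append (a := a) (l₁ := l.take j) (l₂ := l.drop j)
  rw [List.take_append_drop] at this
  have c1 : 1 ≤ (l.take j).count a := List.one_le_count_iff.mpr h1
  have c2 : 1 ≤ (l.drop j).count a := List.one_le_count_iff.mpr h2
  omega



section eigList
variable {V : Type*} [Fintype V] [DecidableEq V] {A : Matrix V V ℝ}

/-- reinterpret a function as a Euclidean space element -/
def toE (x : V → ℝ) : EuclideanSpace ℝ V := WithLp.toLp 2 x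

lemma inner_real_eq_mul' (a b : ℝ) : inner ℝ a b = a * b := by simp [mul_comm]

lemma dotProduct_eq_inner (x y : V → ℝ) :
    dotProduct x y = (inner ℝ (toE x) (toE y) : ℝ) := by
  rw [PiLp.inner_apply]
  simp only [inner_real_eq_mul']
  rfl

lemma eigList_def (hA : A.IsHermitian) :
    eigList A = (Finset.univ.val.map hA.eigenvalues).sort (· ≤ ·) := by
  rw [eigList, dif_pos hA]

lemma eigList_length_s11 (hA : A.IsHermitian) : (eigList A).length = Fintype.card V := by
  rw [eigList_def hA, Multiset.length_sort, Multiset.card_map]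
  rfl

lemma eigList_sorted_s11 (hA : A.IsHermitian) : (eigList A).Pairwise (· ≤ ·) := by
  rw [eigList_def hA]; exact Multiset.pairwise_sort _ _

lemma eigList_mem (hA : A.IsHermitian) {x : ℝ} (hx : x ∈ eigList A) :
    ∃ i, hA.eigenvalues i = x := by
  rw [eigList_def hA, Multiset.mem_sort, Multiset.mem_map] at hx
  obtain ⟨i, _, hi⟩ := hx
  exact ⟨i, hi⟩

lemma eigList_countP (hA : A.IsHermitian) (p : ℝ → Prop) :
    (eigList A).countP (fun a => decide (p a)) =
      (Finset.univ.filter (fun i => p (hA.eigenvalues i))).card := by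
  rw [eigList_def hA]
  have h : ((Finset.univ.val.map hA.eigenvalues).sort (· ≤ ·) : Multiset ℝ).countP p
      = Multiset.countP p (Finset.univ.val.map hA.eigenvalues) := by
    rw [Multiset.sort_eq]
  rw [Multiset.coe_countP] at h
  rw [h, Multiset.countP_map]
  rfl

lemma eigList_count (hA : A.IsHermitian) (a : ℝ) :
    (eigList A).count a = (Finset.univ.filter (fun i => hA.eigenvalues i = a)).card := by
  rw [eigList_def hA]
  have h : ((Finset.univ.val.map hA.eigenvalues).sort (· ≤ ·) : Multiset ℝ).count a
      = Multiset.count a (Finset.univ.val.map hA.eigenvalues) := by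
    rw [Multiset.sort_eq]
  rw [Multiset.coe_count] at h
  rw [h, Multiset.count_map]
  simp_rw [eq_comm]
  rfl

/-- coefficient of x in the eigenbasis -/
noncomputable def eigCoef (hA : A.IsHermitian) (x : V → ℝ) (i : V) : ℝ :=
  hA.eigenvectorBasis.repr (toE x) i

lemma eigCoef_dotProduct (hA : A.IsHermitian) (x y : V → ℝ) :
    dotProduct x y = ∑ i, eigCoef hA x i * eigCoef hA y i := by
  have h2 := hA.eigenvectorBasis.repr.inner_map_map (toE x) (toE y)
  rw [dotProduct_eq_inner, ← h2, PiLp.inner_apply]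
  simp only [inner_real_eq_mul']
  rfl

lemma eigCoef_eq_dotProduct (hA : A.IsHermitian) (x : V → ℝ) (i : V) :
    eigCoef hA x i = dotProduct (hA.eigenvectorBasis i) x := by
  rw [eigCoef, OrthonormalBasis.repr_apply_apply, PiLp.inner_apply]
  simp only [inner_real_eq_mul']
  rfl

lemma eigCoef_mulVec (hA : A.IsHermitian) (x : V → ℝ) (i : V) :
    eigCoef hA (A.mulVec x) i = hA.eigenvalues i * eigCoef hA x i := by
  have hsym : A.transpose = A := by
    have h := hA.eq
    rwa [Matrix.conjTranspose_eq_transpose_of_trivial] at h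
  rw [eigCoef_eq_dotProduct, Matrix.dotProduct_mulVec, ← Matrix.mulVec_transpose, hsym]
  have h3 : A.mulVec (hA.eigenvectorBasis i)
      = hA.eigenvalues i • (hA.eigenvectorBasis i : V → ℝ) := hA.mulVec_eigenvectorBasis i
  rw [h3, smul_dotProduct, eigCoef_eq_dotProduct]
  rfl

lemma eigCoef_exists_ne_zero (hA : A.IsHermitian) {x : V → ℝ} (hx : x ≠ 0) :
    ∃ i, eigCoef hA x i ≠ 0 := by
  by_contra hc
  push_neg at hc
  have h : hA.eigenvectorBasis.repr (toE x) = 0 := by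
    ext i; exact hc i
  rw [LinearIsometryEquiv.map_eq_zero_iff] at h
  exact hx (congrArg WithLp.ofLp h)

lemma eigCoef_zero (hA : A.IsHermitian) (i : V) : eigCoef hA (0 : V → ℝ) i = 0 := by
  rw [eigCoef]
  have h : toE (0 : V → ℝ) = 0 := rfl
  rw [h, map_zero]
  rfl

end eigList

lemma cf_second_smallest {V : Type*} [Fintype V] [DecidableEq V]
    {L : Matrix V V ℝ} (hL : L.IsHermitian) (hpsd : L.PosSemidef)
    {w : V → ℝ} (hw : w ≠ 0) (hLw : L.mulVec w = 0)
    (x : V → ℝ) (hwx : dotProduct w x = 0) :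
    (eigList L).getD 1 0 * dotProduct x x ≤ dotProduct x (L.mulVec x) := by
  set μ := (eigList L).getD 1 0 with hμdef
  by_cases hμ : μ ≤ 0
  · have h1 : 0 ≤ dotProduct x (L.mulVec x) := by
      have h := hpsd.dotProduct_mulVec_nonneg x
      simpa using h
    have h2 : 0 ≤ dotProduct x x := by
      apply Finset.sum_nonneg
      intro i _
      exact mul_self_nonneg _
    nlinarith
  · push_neg at hμ
    obtain ⟨i₀, hi₀⟩ := eigCoef_exists_ne_zero hL hw
    have hzero : ∀ i, hL.eigenvalues i * eigCoef hL w i = 0 := by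
      intro i
      rw [← eigCoef_mulVec hL w i, hLw, eigCoef_zero]
    have hei₀ : hL.eigenvalues i₀ = 0 := (mul_eq_zero.1 (hzero i₀)).resolve_right hi₀
    have hkey : ∀ i, i ≠ i₀ → μ ≤ hL.eigenvalues i := by
      intro i hne
      by_contra hc
      push_neg at hc
      set z := max (hL.eigenvalues i) 0 with hz
      have hzμ : z < μ := max_lt hc hμ
      have h2 : 2 ≤ (Finset.univ.filter (fun j => hL.eigenvalues j ≤ z)).card := by
        refine Finset.one_lt_card.mpr ⟨i, ?_, i₀, ?_, hne⟩ <;>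
          simp [hei₀, le_max_left, le_max_right, hz]
      have h3 := sorted_getD_le_of_countP (eigList_sorted_s11 hL) (k := 1) (x := z)
        (by rw [eigList_countP hL (fun a => a ≤ z)]; omega)
      rw [← hμdef] at h3
      linarith
    have hczero : ∀ i, i ≠ i₀ → eigCoef hL w i = 0 := by
      intro i hne
      exact (mul_eq_zero.1 (hzero i)).resolve_left
        (ne_of_gt (lt_of_lt_of_le hμ (hkey i hne)))
    have hbi₀ : eigCoef hL x i₀ = 0 := by
      have hsum := eigCoef_dotProduct hL w x
      rw [hwx] at hsum
      have hsingle : ∑ i, eigCoef hL w i * eigCoef hL x i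
          = eigCoef hL w i₀ * eigCoef hL x i₀ := by
        apply Finset.sum_eq_single
        · intro b _ hb
          rw [hczero b hb, zero_mul]
        · intro h
          exact absurd (Finset.mem_univ i₀) h
      have h0 : eigCoef hL w i₀ * eigCoef hL x i₀ = 0 := by rw [← hsingle, ← hsum]
      exact (mul_eq_zero.1 h0).resolve_left hi₀
    calc μ * dotProduct x x
        = ∑ i, μ * (eigCoef hL x i * eigCoef hL x i) := by
          rw [eigCoef_dotProduct hL x x, Finset.mul_sum]
      _ ≤ ∑ i, hL.eigenvalues i * (eigCoef hL x i * eigCoef hL x i) := by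
          apply Finset.sum_le_sum
          intro i _
          by_cases hi : i = i₀
          · subst hi; rw [hbi₀]; simp
          · exact mul_le_mul_of_nonneg_right (hkey i hi) (mul_self_nonneg _)
      _ = dotProduct x (L.mulVec x) := by
          rw [eigCoef_dotProduct hL x (L.mulVec x)]
          apply Finset.sum_congr rfl
          intro i _
          rw [eigCoef_mulVec]
          ring


/-- Algebraic connectivity: second smallest Laplacian eigenvalue. -/
noncomputable def algConn {V : Type*} [Fintype V] [DecidableEq V]
    (G : SimpleGraph V) : ℝ :=
  (eigList (G.lapMatrix ℝ)).getD 1 0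

/-- The second largest adjacency eigenvalue of a graph. -/
noncomputable def secondLargestAdjEig {V : Type*} [Fintype V] [DecidableEq V]
    (G : SimpleGraph V) : ℝ :=
  (eigList (G.adjMatrix ℝ)).getD (Fintype.card V - 2) 0

/-- `calG` is a `k`-fold `G`-connected-`H` graph (with `H` on `t·d` vertices, `d` the
degree of `G`): the induced subgraph on each copy `{g} × V_H` is isomorphic to `H`; the
remaining ("matching") edges form a `k`-regular graph; and the number of matching edges
between two distinct copies is `k·t` if the copies are adjacent in `G` and `0`
otherwise. -/
structure IsGConnH {VG VH : Type*} [Fintype VG] [Fintype VH]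
    (G : SimpleGraph VG) (H : SimpleGraph VH) (k t : ℕ)
    (calG : SimpleGraph (VG × VH)) : Prop where
  copy_iso : ∀ g : VG, Nonempty (H ≃g (calG.induce {p : VG × VH | p.1 = g}))
  cross_regular : ∀ p : VG × VH,
    ((Finset.univ : Finset (VG × VH)).filter
        (fun q => q.1 ≠ p.1 ∧ calG.Adj p q)).card = k
  cross_count : ∀ v v' : VG, v ≠ v' →
    ((Finset.univ : Finset (VH × VH)).filter
        (fun e => calG.Adj (v, e.1) (v', e.2))).card =
      if G.Adj v v' then k * t else 0

set_option maxHeartbeats 1000000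

/-- Let `G` be a connected `d`-regular graph, `H` a connected `r`-regular graph on
`t·d` vertices, and `𝒢 = G ⇝ₖ H` a `k`-fold `G`-connected-`H` graph.  If `λ₂` is the
second largest adjacency eigenvalue of `G`, then `ρ₂(𝒢) ≤ k − k·λ₂/d`. -/
theorem gConnH_algConn_bound {VG VH : Type*} [Fintype VG] [Fintype VH]
    [DecidableEq VG] [DecidableEq VH] {d r t k : ℕ}
    (G : SimpleGraph VG) (H : SimpleGraph VH)
    (hGconn : G.Connected) (hHconn : H.Connected)
    (hGreg : G.IsRegularOfDegree d) (hHreg : H.IsRegularOfDegree r)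
    (hcard : Fintype.card VH = t * d)
    (calG : SimpleGraph (VG × VH)) (hstruct : IsGConnH G H k t calG) :
    algConn calG ≤ (k : ℝ) - (k : ℝ) * secondLargestAdjEig G / d := by
  have hVH : Nonempty VH := hHconn.nonempty
  obtain ⟨h₀⟩ := hVH
  have hd : 0 < d := by
    rcases Nat.eq_zero_or_pos d with h | h
    · exfalso
      rw [h, Nat.mul_zero] at hcard
      exact absurd hcard (by
        have : Nonempty VH := ⟨h₀⟩
        exact Fintype.card_pos.ne')
    · exact h
  have ht : 0 < t := by
    rcases Nat.eq_zero_or_pos t with h | h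
    · exfalso
      rw [h, Nat.zero_mul] at hcard
      exact absurd hcard (by
        have : Nonempty VH := ⟨h₀⟩
        exact Fintype.card_pos.ne')
    · exact h
  have hVG : Nonempty VG := hGconn.nonempty
  obtain ⟨v₀⟩ := hVG
  have hnbr : (G.neighborFinset v₀).Nonempty := by
    rw [← Finset.card_pos, SimpleGraph.card_neighborFinset_eq_degree, hGreg v₀]
    exact hd
  obtain ⟨u₀, hu₀⟩ := hnbr
  have hadj : G.Adj v₀ u₀ := (SimpleGraph.mem_neighborFinset G v₀ u₀).1 hu₀
  have hn2 : 1 < Fintype.card VG :=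
    Fintype.one_lt_card_iff.mpr ⟨u₀, v₀, (G.ne_of_adj hadj).symm⟩
  -- adjacency matrix of G is hermitian
  have hA : (G.adjMatrix ℝ).IsHermitian := by
    rw [Matrix.IsHermitian, Matrix.conjTranspose_eq_transpose_of_trivial]
    exact G.transpose_adjMatrix
  set eig := hA.eigenvalues with heig
  set eVec : VG → (VG → ℝ) := fun i => hA.eigenvectorBasis i with heVec
  have hmv : ∀ i, (G.adjMatrix ℝ).mulVec (eVec i) = eig i • eVec i := fun i =>
    hA.mulVec_eigenvectorBasis i
  have hdot : ∀ i j, dotProduct (eVec i) (eVec j) = if i = j then 1 else 0 := by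
    intro i j
    rw [dotProduct_eq_inner]
    exact orthonormal_iff_ite.mp hA.eigenvectorBasis.orthonormal i j
  -- Laplacian acting on eigenvectors
  have hLu : ∀ i, (G.lapMatrix ℝ).mulVec (eVec i) = ((d : ℝ) - eig i) • eVec i := by
    intro i
    funext v
    rw [Pi.smul_apply, SimpleGraph.lapMatrix_mulVec_apply,
      ← SimpleGraph.adjMatrix_mulVec_apply, hmv i, hGreg v, Pi.smul_apply]
    simp only [smul_eq_mul]
    ring
  -- all eigenvalues are at most d
  have hle : ∀ i, eig i ≤ (d : ℝ) := by
    intro i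
    have h0 := (SimpleGraph.posSemidef_lapMatrix ℝ G).dotProduct_mulVec_nonneg (eVec i)
    have h1 : dotProduct (eVec i) (eVec i) = 1 := by rw [hdot i i, if_pos rfl]
    rw [star_trivial, hLu i, dotProduct_smul, smul_eq_mul, h1, mul_one] at h0
    linarith
  -- the all-ones vector on VG
  set one : VG → ℝ := fun _ => 1 with hone
  have honef : one ≠ 0 := by
    intro h
    have := congrFun h v₀
    simp [hone] at this
  have hA1 : (G.adjMatrix ℝ).mulVec one = (d : ℝ) • one := by
    funext v
    have h := SimpleGraph.adjMatrix_mulVec_const_apply_of_regular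
      (α := ℝ) (a := (1 : ℝ)) hGreg (v := v)
    simp only [hone, Pi.smul_apply, smul_eq_mul, mul_one]
    simpa [Function.const] using h
  -- at most one eigenvector (index) has eigenvalue d
  have hker : ∀ m, eig m = (d : ℝ) → ∀ a b : VG, eVec m a = eVec m b := by
    intro m hm a b
    have h0 : (G.lapMatrix ℝ).mulVec (eVec m) = 0 := by
      rw [hLu m, hm]
      simp
    have h1 : Matrix.toLin' (G.lapMatrix ℝ) (eVec m) = 0 := by
      rw [Matrix.toLin'_apply]
      exact h0
    exact (SimpleGraph.lapMatrix_mulVec_eq_zero_iff_forall_reachable G).mp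
      h0 a b (hGconn.preconnected a b)
  have huniq : ∀ i j, eig i = (d : ℝ) → eig j = (d : ℝ) → i = j := by
    intro i j hi hj
    by_contra hne
    have hio : dotProduct (eVec i) (eVec j) = 0 := by rw [hdot i j, if_neg hne]
    have hsum : dotProduct (eVec i) (eVec j)
        = (Fintype.card VG : ℝ) * (eVec i v₀ * eVec j v₀) := by
      rw [dotProduct]
      rw [Finset.sum_congr rfl (fun a _ => by rw [hker i hi a v₀, hker j hj a v₀])]
      rw [Finset.sum_const, Finset.card_univ, nsmul_eq_mul]
    have hiv : eVec i v₀ ≠ 0 := by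
      intro h0
      apply hA.eigenvectorBasis.orthonormal.ne_zero i
      have hz : eVec i = 0 := funext fun a => by rw [hker i hi a v₀, h0]; simp
      exact congrArg (WithLp.toLp 2) hz
    have hjv : eVec j v₀ ≠ 0 := by
      intro h0
      apply hA.eigenvectorBasis.orthonormal.ne_zero j
      have hz : eVec j = 0 := funext fun a => by rw [hker j hj a v₀, h0]; simp
      exact congrArg (WithLp.toLp 2) hz
    have hcVG : (0 : ℝ) < Fintype.card VG := by
      have : Nonempty VG := ⟨v₀⟩
      exact_mod_cast Fintype.card_pos (α := VG)
    have : (Fintype.card VG : ℝ) * (eVec i v₀ * eVec j v₀) ≠ 0 :=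
      mul_ne_zero (ne_of_gt hcVG) (mul_ne_zero hiv hjv)
    rw [hsum] at hio
    exact this hio
  -- λ₂ setup
  set l := eigList (G.adjMatrix ℝ) with hldef
  set lam := secondLargestAdjEig G with hlam
  have hlen : l.length = Fintype.card VG := eigList_length_s11 hA
  have hn1 : Fintype.card VG - 2 < l.length := by rw [hlen]; omega
  have hn1' : Fintype.card VG - 1 < l.length := by rw [hlen]; omega
  have hlamdef : lam = l.getD (Fintype.card VG - 2) 0 := rfl
  have hlam_ne : lam ≠ (d : ℝ) := by
    intro hlamd
    have hl2 : l[Fintype.card VG - 2]'hn1 = (d : ℝ) := by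
      rw [← List.getD_eq_getElem l 0 hn1, ← hlamdef]
      exact hlamd
    have hl1le : l[Fintype.card VG - 1]'hn1' ≤ (d : ℝ) := by
      obtain ⟨i, hi⟩ := eigList_mem hA (List.getElem_mem hn1')
      rw [← hi]
      exact hle i
    have hl1ge : l[Fintype.card VG - 2]'hn1 ≤ l[Fintype.card VG - 1]'hn1' := by
      have hs : l.Pairwise (· ≤ ·) := by rw [hldef]; exact eigList_sorted_s11 hA
      exact sorted_getElem_le hs (by omega) hn1'
    have hl1 : l[Fintype.card VG - 1]'hn1' = (d : ℝ) := le_antisymm hl1le (hl2 ▸ hl1ge)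
    have hcount := two_le_count_of_two_getElem (i := Fintype.card VG - 2)
      (j := Fintype.card VG - 1) (by omega) hn1' hl2 hl1
    rw [hldef, eigList_count hA] at hcount
    obtain ⟨i, hi, j, hj, hne⟩ := Finset.one_lt_card.mp hcount
    simp only [Finset.mem_filter] at hi hj
    exact hne (huniq i j hi.2 hj.2)
  -- lam is an eigenvalue, with eigenvector f
  have hmeml : lam ∈ l := by
    rw [hlamdef, List.getD_eq_getElem l 0 hn1]
    exact List.getElem_mem hn1
  obtain ⟨i₂, hi₂⟩ := eigList_mem hA hmeml
  rw [← heig] at hi₂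
  set f := eVec i₂ with hfdef
  have hf0 : f ≠ 0 := by
    intro h
    apply hA.eigenvectorBasis.orthonormal.ne_zero i₂
    rw [hfdef] at h
    exact congrArg (WithLp.toLp 2) h
  have hAf : (G.adjMatrix ℝ).mulVec f = lam • f := by
    rw [hfdef, hmv i₂, hi₂]
  -- f is orthogonal to the all-ones vector
  have hsymA : (G.adjMatrix ℝ).transpose = G.adjMatrix ℝ := G.transpose_adjMatrix
  have hswap : ∀ a b : VG → ℝ, dotProduct a ((G.adjMatrix ℝ).mulVec b)
      = dotProduct b ((G.adjMatrix ℝ).mulVec a) := by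
    intro a b
    rw [Matrix.dotProduct_mulVec, ← Matrix.mulVec_transpose, hsymA, dotProduct_comm]
  have hof : dotProduct one f = 0 := by
    have hsw := hswap one f
    rw [hAf, hA1, dotProduct_smul, dotProduct_smul, smul_eq_mul, smul_eq_mul,
      dotProduct_comm f one] at hsw
    have hfac : ((d : ℝ) - lam) * dotProduct one f = 0 := by ring_nf; linarith
    have hdl : ((d : ℝ) - lam) ≠ 0 := sub_ne_zero.mpr (Ne.symm hlam_ne)
    exact (mul_eq_zero.1 hfac).resolve_left hdl
  -- quadratic form of G at f
  have h1f : dotProduct f ((G.lapMatrix ℝ).mulVec f)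
      = ((d : ℝ) - lam) * dotProduct f f := by
    rw [hfdef, hLu i₂, hi₂, dotProduct_smul, smul_eq_mul]
  have hSG : (∑ a : VG, ∑ b : VG, if G.Adj a b then (f a - f b) ^ 2 else 0)
      = 2 * (((d : ℝ) - lam) * dotProduct f f) := by
    have hqg := SimpleGraph.lapMatrix_toLinearMap₂' ℝ G f
    rw [Matrix.toLinearMap₂'_apply', h1f] at hqg
    linarith
  have hFpos : 0 < dotProduct f f := by
    have h0 : 0 ≤ dotProduct f f := Finset.sum_nonneg fun i _ => mul_self_nonneg _
    have hne : dotProduct f f ≠ 0 := fun h => hf0 (dotProduct_self_eq_zero.mp h)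
    exact lt_of_le_of_ne h0 (Ne.symm hne)
  -- setup on calG
  have hL2 : (calG.lapMatrix ℝ).IsHermitian := by
    rw [Matrix.IsHermitian, Matrix.conjTranspose_eq_transpose_of_trivial]
    exact calG.isSymm_lapMatrix (R := ℝ)
  have hpsd2 : (calG.lapMatrix ℝ).PosSemidef := SimpleGraph.posSemidef_lapMatrix ℝ calG
  set o2 : VG × VH → ℝ := fun _ => 1 with ho2
  have ho2ne : o2 ≠ 0 := by
    intro h
    have := congrFun h (v₀, h₀)
    simp [ho2] at this
  have hLw : (calG.lapMatrix ℝ).mulVec o2 = 0 := by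
    rw [ho2]
    exact SimpleGraph.lapMatrix_mulVec_const_eq_zero calG
  set x : VG × VH → ℝ := fun p => f p.1 with hx
  have hsumf : ∑ g : VG, f g = 0 := by
    have h : dotProduct one f = ∑ g : VG, f g := by
      simp [dotProduct, hone]
    rw [← h, hof]
  have hwx : dotProduct o2 x = 0 := by
    simp only [ho2, hx, dotProduct, one_mul]
    rw [Fintype.sum_prod_type]
    simp only [Finset.sum_const, Finset.card_univ, nsmul_eq_mul]
    rw [← Finset.mul_sum, hsumf, mul_zero]
  have hCF := cf_second_smallest hL2 hpsd2 ho2ne hLw x hwx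
  -- the norm of x
  have hxx : dotProduct x x = (t : ℝ) * (d : ℝ) * dotProduct f f := by
    simp only [hx, dotProduct]
    simp only [Fintype.sum_prod_type]
    simp only [Finset.sum_const, Finset.card_univ, nsmul_eq_mul]
    rw [← Finset.mul_sum, hcard]
    push_cast
    ring
  -- inner double-sum computation
  have hinner : ∀ g g' : VG, (∑ a : VH, ∑ b : VH,
        if calG.Adj (g, a) (g', b) then (f g - f g') ^ 2 else 0)
      = if G.Adj g g' then ((k : ℝ) * (t : ℝ)) * (f g - f g') ^ 2 else 0 := by
    intro g g'
    by_cases hgg : g = g'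
    · subst hgg
      simp [SimpleGraph.irrefl]
    · have hc := hstruct.cross_count g g' hgg
      have h1 : (∑ a : VH, ∑ b : VH, if calG.Adj (g, a) (g', b) then (f g - f g') ^ 2 else 0)
          = ∑ e : VH × VH, if calG.Adj (g, e.1) (g', e.2) then (f g - f g') ^ 2 else 0 :=
        (Fintype.sum_prod_type
          (fun e : VH × VH => if calG.Adj (g, e.1) (g', e.2) then (f g - f g') ^ 2 else 0)).symm
      have h2 : (∑ e : VH × VH, if calG.Adj (g, e.1) (g', e.2) then (f g - f g') ^ 2 else 0)
          = ∑ _e ∈ Finset.univ.filter (fun e : VH × VH => calG.Adj (g, e.1) (g', e.2)),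
              (f g - f g') ^ 2 :=
        (Finset.sum_filter (fun e : VH × VH => calG.Adj (g, e.1) (g', e.2))
          (fun _ => (f g - f g') ^ 2)).symm
      rw [h1, h2, Finset.sum_const, hc]
      by_cases hadj : G.Adj g g'
      · rw [if_pos hadj, if_pos hadj, nsmul_eq_mul]
        push_cast
        ring
      · rw [if_neg hadj, if_neg hadj]
        simp
  have hbig : (∑ p : VG × VH, ∑ q : VG × VH, if calG.Adj p q then (f p.1 - f q.1) ^ 2 else 0)
      = (k : ℝ) * (t : ℝ) * (∑ a : VG, ∑ b : VG, if G.Adj a b then (f a - f b) ^ 2 else 0) := by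
    simp only [Fintype.sum_prod_type]
    have hcomm : ∀ g : VG, (∑ a : VH, ∑ g' : VG, ∑ b : VH,
          if calG.Adj (g, a) (g', b) then (f g - f g') ^ 2 else 0)
        = ∑ g' : VG, ∑ a : VH, ∑ b : VH,
          if calG.Adj (g, a) (g', b) then (f g - f g') ^ 2 else 0 := fun g =>
      Finset.sum_comm
    simp only [hcomm, hinner]
    rw [Finset.mul_sum]
    refine Finset.sum_congr rfl fun g _ => ?_
    rw [Finset.mul_sum]
    refine Finset.sum_congr rfl fun g' _ => ?_
    by_cases hadj : G.Adj g g' <;> simp [hadj]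
  -- quadratic form of calG at x
  have hq : dotProduct x ((calG.lapMatrix ℝ).mulVec x)
      = (∑ p : VG × VH, ∑ q : VG × VH, if calG.Adj p q then (x p - x q) ^ 2 else 0) / 2 := by
    have h := SimpleGraph.lapMatrix_toLinearMap₂' ℝ calG x
    rw [Matrix.toLinearMap₂'_apply'] at h
    exact h
  have hxLx : dotProduct x ((calG.lapMatrix ℝ).mulVec x)
      = (k : ℝ) * (t : ℝ) * (((d : ℝ) - lam) * dotProduct f f) := by
    rw [hq]
    have hxpq : (∑ p : VG × VH, ∑ q : VG × VH, if calG.Adj p q then (x p - x q) ^ 2 else 0)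
        = ∑ p : VG × VH, ∑ q : VG × VH, if calG.Adj p q then (f p.1 - f q.1) ^ 2 else 0 := by
      simp only [hx]
    rw [hxpq, hbig, hSG]
    ring
  -- final assembly
  have halg : algConn calG = (eigList (calG.lapMatrix ℝ)).getD 1 0 := rfl
  have hdR : (0 : ℝ) < d := by exact_mod_cast hd
  have htR : (0 : ℝ) < t := by exact_mod_cast ht
  have hden : (0 : ℝ) < (t : ℝ) * (d : ℝ) * dotProduct f f :=
    mul_pos (mul_pos htR hdR) hFpos
  have hfin : algConn calG ≤ ((k : ℝ) * (t : ℝ) * (((d : ℝ) - lam) * dotProduct f f))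
      / ((t : ℝ) * (d : ℝ) * dotProduct f f) := by
    rw [le_div_iff₀ hden]
    calc algConn calG * ((t : ℝ) * (d : ℝ) * dotProduct f f)
        = algConn calG * dotProduct x x := by rw [hxx]
      _ ≤ dotProduct x ((calG.lapMatrix ℝ).mulVec x) := by rw [halg]; exact hCF
      _ = _ := hxLx
  refine le_trans hfin ?_
  have heq : ((k : ℝ) * (t : ℝ) * (((d : ℝ) - lam) * dotProduct f f))
      / ((t : ℝ) * (d : ℝ) * dotProduct f f) = (k : ℝ) - (k : ℝ) * lam / (d : ℝ) := by
    have hFne : dotProduct f f ≠ 0 := ne_of_gt hFpos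
    field_simp
  rw [heq]
end
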